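/- arXiv:1409.1156 — 4 statements merged into one kernel-verified Lean document; each statement's English description precedes it below -/
import Mathlib

section
/- Let $(\Omega,\mathcal{F},\mathbb{P})$ be a probability space endowed with a measure-preserving $\mathbb{Z}^d$-group action $\{\theta_k\}_{k \in \mathbb{Z}^d}$, and let $\ell : \Omega \to \mathcal{L}(\mathbb{R}^d)$ be an increment-stationary random point set with associated random vectors $\{Y_k\}_{k \in \mathbb{Z}^d}$. Let $V : \mathbb{R}^d \setminus \{0\} \to [0,\infty)$ be a nonnegative two-body potential and for $R > 0$ set $Q_R := [-R,R)^d$. Then for every $k \in \mathbb{Z}^d$ and almost every $\omega \in \Omega$, $\limsup_{R \to \infty} |Q_R|^{-1} \mathcal{E}(\ell(\theta_k\omega), Q_R) = \limsup_{R \to \infty} |Q_R|^{-1} \mathcal{E}(\ell(\omega), Q_R)$ (as elements of $[0,\infty]$). If moreover the group action is ergodic, then there is a deterministic $e^* \in [0,\infty]$ such that $\limsup_{R \to \infty} |Q_R|^{-1} \mathcal{E}(\ell(\omega), Q_R) = e^*$ for almost every $\omega$. -/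
open MeasureTheory Filter
open scoped ENNReal BigOperators

noncomputable section

/-- Euclidean space `ℝ^d`. -/
abbrev Rd (d : ℕ) : Type := EuclideanSpace ℝ (Fin d)

/-- The lattice `ℤ^d`. -/
abbrev Zd (d : ℕ) : Type := Fin d → ℤ

variable {d : ℕ}

/-- Cast of a lattice vector to `ℝ^d`. -/
def castZ (k : Zd d) : Rd d := WithLp.toLp 2 (fun i => (k i : ℝ))

/-- Cast of a plain vector to `ℝ^d`. -/
def castR (v : Fin d → ℝ) : Rd d := WithLp.toLp 2 v

/-- The `l`-th canonical basis vector of `ℤ^d`. -/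
def zbasis (l : Fin d) : Zd d := Pi.single l 1

/-- A set of points is locally finite if it has finitely many points in every closed ball. -/
def LocFin {d : ℕ} (s : Set (Rd d)) : Prop :=
  ∀ R : ℝ, (s ∩ Metric.closedBall 0 R).Finite

/- The two-body interaction energy of the point set `s` in the region `D`, for the
(nonnegative) two-body potential `V`; valued in `[0,∞]`. -/
open Classical in
def energy {d : ℕ} (V : Rd d → ℝ) (s D : Set (Rd d)) : ℝ≥0∞ :=
  (1/2 : ℝ≥0∞) * ∑' x : ↥(s ∩ D), ∑' y : ↥(s ∩ D),
    if (x : Rd d) ≠ (y : Rd d) then ENNReal.ofReal (V ((x : Rd d) - (y : Rd d))) else 0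

/-- The cube `Q_R = [-R,R)^d`. -/
def QR (d : ℕ) (R : ℝ) : Set (Rd d) := {x | ∀ i, -R ≤ x i ∧ x i < R}

open Classical in
def pairF (V : Rd d → ℝ) (A : Set (Rd d)) (x y : Rd d) : ℝ≥0∞ :=
  if x ∈ A ∧ y ∈ A ∧ x ≠ y then ENNReal.ofReal (V (x - y)) else 0

open Classical in
lemma energy_eq (V : Rd d → ℝ) (s D : Set (Rd d)) :
    energy V s D = (1/2 : ℝ≥0∞) * ∑' x : Rd d, ∑' y : Rd d, pairF V (s ∩ D) x y := by
  set A := s ∩ D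
  unfold energy
  congr 1
  have h1 : ∀ x : Rd d, (∑' y : ↥A, if x ≠ (y : Rd d) then ENNReal.ofReal (V (x - y)) else 0)
      = ∑' y : Rd d, A.indicator (fun y => if x ≠ y then ENNReal.ofReal (V (x - y)) else 0) y :=
    fun x => tsum_subtype A (fun y => if x ≠ y then ENNReal.ofReal (V (x - y)) else 0)
  calc (∑' x : ↥A, ∑' y : ↥A, if (x : Rd d) ≠ (y : Rd d) then ENNReal.ofReal (V ((x:Rd d) - y)) else 0)
      = ∑' x : ↥A, ∑' y : Rd d,
          A.indicator (fun y => if (x:Rd d) ≠ y then ENNReal.ofReal (V ((x:Rd d) - y)) else 0) y := by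
        exact tsum_congr fun x => h1 x
    _ = ∑' x : Rd d, A.indicator (fun x => ∑' y : Rd d,
          A.indicator (fun y => if x ≠ y then ENNReal.ofReal (V (x - y)) else 0) y) x :=
        tsum_subtype A (fun x => ∑' y : Rd d,
          A.indicator (fun y => if x ≠ y then ENNReal.ofReal (V (x - y)) else 0) y)
    _ = ∑' x : Rd d, ∑' y : Rd d, pairF V A x y := by
        refine tsum_congr fun x => ?_
        by_cases hx : x ∈ A
        · rw [Set.indicator_of_mem hx]
          refine tsum_congr fun y => ?_
          by_cases hy : y ∈ A
          · rw [Set.indicator_of_mem hy]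
            unfold pairF
            by_cases hxy : x ≠ y
            · rw [if_pos hxy, if_pos ⟨hx, hy, hxy⟩]
            · rw [if_neg hxy, if_neg (by tauto)]
          · rw [Set.indicator_of_notMem hy]
            unfold pairF
            rw [if_neg (by tauto)]
        · rw [Set.indicator_of_notMem hx]
          simp only [pairF]
          exact ((tsum_congr (fun y => by rw [if_neg (by tauto)])).trans tsum_zero).symm

lemma energy_mono (V : Rd d → ℝ) (s : Set (Rd d)) {D D' : Set (Rd d)} (h : D ⊆ D') :
    energy V s D ≤ energy V s D' := by
  rw [energy_eq, energy_eq]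
  refine mul_le_mul_right (ENNReal.tsum_le_tsum fun x => ENNReal.tsum_le_tsum fun y => ?_) _
  classical
  unfold pairF
  by_cases h1 : x ∈ s ∩ D ∧ y ∈ s ∩ D ∧ x ≠ y
  · rw [if_pos h1, if_pos ⟨⟨h1.1.1, h h1.1.2⟩, ⟨h1.2.1.1, h h1.2.1.2⟩, h1.2.2⟩]
  · rw [if_neg h1]; exact zero_le

lemma energy_translate (V : Rd d → ℝ) (s D : Set (Rd d)) (v : Rd d) :
    energy V ((fun x => x + v) '' s) D = energy V s ((fun x => x + v) ⁻¹' D) := by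
  classical
  rw [energy_eq, energy_eq]
  congr 1
  rw [← (Equiv.addRight v).tsum_eq
    (fun x => ∑' y : Rd d, pairF V (((fun x => x + v) '' s) ∩ D) x y)]
  refine tsum_congr fun x => ?_
  rw [← (Equiv.addRight v).tsum_eq
    (fun y => pairF V (((fun x => x + v) '' s) ∩ D) (Equiv.addRight v x) y)]
  refine tsum_congr fun y => ?_
  show pairF V (((fun x => x + v) '' s) ∩ D) (x + v) (y + v)
      = pairF V (s ∩ ((fun x => x + v) ⁻¹' D)) x y
  unfold pairF
  have hmem : ∀ z : Rd d, (z + v ∈ ((fun x => x + v) '' s) ∩ D) ↔ z ∈ s ∩ ((fun x => x + v) ⁻¹' D) := by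
    intro z
    simp only [Set.mem_inter_iff, Set.mem_image, Set.mem_preimage]
    constructor
    · rintro ⟨⟨w, hw, hwz⟩, hD⟩
      exact ⟨by rwa [add_left_injective v hwz] at hw, hD⟩
    · rintro ⟨hz, hD⟩
      exact ⟨⟨z, hz, rfl⟩, hD⟩
  have hne : (x + v ≠ y + v) ↔ x ≠ y := by
    constructor
    · intro h hxy; exact h (by rw [hxy])
    · intro h hxy; exact h (add_left_injective v hxy)
  simp only [hmem, hne, add_sub_add_right_eq_sub]
  congr

lemma QR_mono {R R' : ℝ} (h : R ≤ R') : QR d R ⊆ QR d R' := by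
  intro x hx i
  obtain ⟨h1, h2⟩ := hx i
  exact ⟨le_trans (neg_le_neg h) h1, lt_of_lt_of_le h2 h⟩

lemma limsup_le_of_mul {α : Type*} {l : Filter α} {u v : α → ℝ≥0∞}
    (h : ∀ a : ℝ≥0∞, a < 1 → ∀ᶠ x in l, a * u x ≤ v x) :
    Filter.limsup u l ≤ Filter.limsup v l := by
  refine ENNReal.le_of_forall_lt_one_mul_le fun a ha => ?_
  calc a * Filter.limsup u l = Filter.limsup (fun x => a * u x) l :=
        (ENNReal.limsup_const_mul_of_ne_top (LT.lt.ne_top ha)).symm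
    _ ≤ Filter.limsup v l := limsup_le_limsup (h a ha)

lemma map_add_atTop_real (c : ℝ) : Filter.map (fun R : ℝ => R + c) atTop = atTop := by
  apply le_antisymm
  · exact tendsto_atTop_add_const_right atTop c tendsto_id
  · have h2 : Tendsto (fun R : ℝ => R + (-c)) atTop atTop :=
      tendsto_atTop_add_const_right atTop (-c) tendsto_id
    have hcomp : (fun R : ℝ => R + c) ∘ (fun R : ℝ => R + (-c)) = id := by
      funext R; simp
    calc atTop = Filter.map (fun R : ℝ => R + c) (Filter.map (fun R : ℝ => R + (-c)) atTop) := by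
          rw [Filter.map_map, hcomp, Filter.map_id]
      _ ≤ Filter.map (fun R : ℝ => R + c) atTop := Filter.map_mono h2

lemma tendsto_ratio (c : ℝ) :
    Tendsto (fun R : ℝ => ((R + c) / R) ^ d) atTop (nhds 1) := by
  have h0 : Tendsto (fun R : ℝ => c / R) atTop (nhds 0) :=
    Tendsto.div_atTop tendsto_const_nhds tendsto_id
  have h1 : Tendsto (fun R : ℝ => 1 + c / R) atTop (nhds 1) := by
    have := tendsto_const_nhds (x := (1:ℝ)) (f := atTop (α := ℝ)) |>.add h0
    simpa using this
  have h2 : Tendsto (fun R : ℝ => (R + c) / R) atTop (nhds 1) := by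
    refine h1.congr' ?_
    filter_upwards [eventually_ne_atTop (0:ℝ)] with R hR
    field_simp
  simpa using h2.pow d

lemma eventually_mul_N_le (c : ℝ) {a : ℝ≥0∞} (ha : a < 1) :
    ∀ᶠ R : ℝ in atTop,
      a * (ENNReal.ofReal ((2*(R+c))^d))⁻¹ ≤ (ENNReal.ofReal ((2*R)^d))⁻¹ := by
  have hat : a ≠ ⊤ := LT.lt.ne_top ha
  have hb : a.toReal < 1 := by
    rw [← ENNReal.toReal_one]
    exact (ENNReal.toReal_lt_toReal hat ENNReal.one_ne_top).2 ha
  have hev : ∀ᶠ R : ℝ in atTop, a.toReal < ((R + c)/R)^d :=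
    (tendsto_ratio c).eventually (eventually_gt_nhds hb)
  filter_upwards [hev, eventually_gt_atTop (0:ℝ), eventually_gt_atTop (-c)] with R hR hR0 hRc
  have hRc0 : 0 < R + c := by linarith
  have hkey : a.toReal * (2*R)^d ≤ (2*(R+c))^d := by
    have hfact : (2*(R+c))^d = ((R+c)/R)^d * (2*R)^d := by
      rw [← mul_pow]
      congr 1
      field_simp
    rw [hfact]
    exact mul_le_mul_of_nonneg_right hR.le (by positivity)
  have hX0 : ENNReal.ofReal ((2*(R+c))^d) ≠ 0 := by
    simp only [ne_eq, ENNReal.ofReal_eq_zero, not_le]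
    positivity
  rw [ENNReal.le_inv_iff_mul_le]
  calc a * (ENNReal.ofReal ((2*(R+c))^d))⁻¹ * ENNReal.ofReal ((2*R)^d)
      = (a * ENNReal.ofReal ((2*R)^d)) * (ENNReal.ofReal ((2*(R+c))^d))⁻¹ := by ring
    _ ≤ ENNReal.ofReal ((2*(R+c))^d) * (ENNReal.ofReal ((2*(R+c))^d))⁻¹ := by
        refine mul_le_mul_left ?_ _
        rw [← ENNReal.ofReal_toReal hat, ← ENNReal.ofReal_mul ENNReal.toReal_nonneg]
        exact ENNReal.ofReal_le_ofReal hkey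
    _ ≤ 1 := by
        rw [ENNReal.mul_inv_cancel hX0 ENNReal.ofReal_ne_top]

lemma limsup_shift (h : ℝ → ℝ≥0∞) (c : ℝ) :
    Filter.limsup (fun R : ℝ => (ENNReal.ofReal ((2*R)^d))⁻¹ * h (R + c)) atTop
      = Filter.limsup (fun R : ℝ => (ENNReal.ofReal ((2*R)^d))⁻¹ * h R) atTop := by
  apply le_antisymm
  · have e1 : Filter.limsup (fun R : ℝ => (ENNReal.ofReal ((2*R)^d))⁻¹ * h (R + c)) atTop
        = Filter.limsup (fun R : ℝ => (ENNReal.ofReal ((2*(R + -c))^d))⁻¹ * h R) atTop := by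
      have hfun : (fun R : ℝ => (ENNReal.ofReal ((2*R)^d))⁻¹ * h (R + c))
          = (fun R : ℝ => (ENNReal.ofReal ((2*(R + -c))^d))⁻¹ * h R) ∘ (fun R : ℝ => R + c) := by
        funext R
        simp [Function.comp]
      rw [hfun, Filter.limsup_comp, map_add_atTop_real]
    rw [e1]
    refine limsup_le_of_mul fun a ha => ?_
    filter_upwards [eventually_mul_N_le (-c) ha] with R hR
    calc a * ((ENNReal.ofReal ((2*(R + -c))^d))⁻¹ * h R)
        = (a * (ENNReal.ofReal ((2*(R + -c))^d))⁻¹) * h R := by ring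
      _ ≤ (ENNReal.ofReal ((2*R)^d))⁻¹ * h R := mul_le_mul_left hR _
  · have e1 : Filter.limsup (fun R : ℝ => (ENNReal.ofReal ((2*R)^d))⁻¹ * h R) atTop
        = Filter.limsup (fun R : ℝ => (ENNReal.ofReal ((2*(R + c))^d))⁻¹ * h (R + c)) atTop := by
      have hfun : (fun R : ℝ => (ENNReal.ofReal ((2*R)^d))⁻¹ * h R)
          = (fun R : ℝ => (ENNReal.ofReal ((2*(R + c))^d))⁻¹ * h (R + c)) ∘ (fun R : ℝ => R + -c) := by
        funext R
        simp [Function.comp]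
      rw [hfun, Filter.limsup_comp, map_add_atTop_real]
    rw [e1]
    refine limsup_le_of_mul fun a ha => ?_
    filter_upwards [eventually_mul_N_le c ha] with R hR
    calc a * ((ENNReal.ofReal ((2*(R + c))^d))⁻¹ * h (R + c))
        = (a * (ENNReal.ofReal ((2*(R + c))^d))⁻¹) * h (R + c) := by ring
      _ ≤ (ENNReal.ofReal ((2*R)^d))⁻¹ * h (R + c) := mul_le_mul_left hR _

lemma inv_ofReal_le {X Y : ℝ} (h : X ≤ Y) :
    (ENNReal.ofReal Y)⁻¹ ≤ (ENNReal.ofReal X)⁻¹ :=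
  ENNReal.inv_le_inv' (ENNReal.ofReal_le_ofReal h)

lemma limsup_real_eq_nat (V : Rd d → ℝ) (s : Set (Rd d)) :
    Filter.limsup (fun R : ℝ =>
        (ENNReal.ofReal ((2*R)^d))⁻¹ * energy V s (QR d R)) atTop
      = Filter.limsup (fun n : ℕ =>
        (ENNReal.ofReal ((2*(n:ℝ))^d))⁻¹ * energy V s (QR d (n:ℝ))) atTop := by
  set g : ℝ → ℝ≥0∞ := fun R => (ENNReal.ofReal ((2*R)^d))⁻¹ * energy V s (QR d R) with hg
  set w : ℕ → ℝ≥0∞ :=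
    fun n => (ENNReal.ofReal ((2*(n:ℝ))^d))⁻¹ * energy V s (QR d ((n:ℝ)+1)) with hw
  apply le_antisymm
  · have key : ∀ᶠ R : ℝ in atTop, g R ≤ w ⌊R⌋₊ := by
      filter_upwards [eventually_ge_atTop (1:ℝ)] with R hR1
      have hR0 : (0:ℝ) ≤ R := by linarith
      have hfl : (⌊R⌋₊ : ℝ) ≤ R := Nat.floor_le hR0
      have hfu : R ≤ (⌊R⌋₊ : ℝ) + 1 := (Nat.lt_floor_add_one R).le
      refine mul_le_mul' ?_ (energy_mono V s (QR_mono hfu))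
      refine inv_ofReal_le (pow_le_pow_left₀ (by positivity) (by linarith) d)
    calc Filter.limsup g atTop ≤ Filter.limsup (fun R : ℝ => w ⌊R⌋₊) atTop :=
          limsup_le_limsup key
      _ = Filter.limsup w (Filter.map (fun R : ℝ => ⌊R⌋₊) atTop) := Filter.limsup_comp w _ _
      _ ≤ Filter.limsup w atTop := limsup_le_limsup_of_le tendsto_nat_floor_atTop
      _ ≤ Filter.limsup (fun n : ℕ =>
            (ENNReal.ofReal ((2*(n:ℝ))^d))⁻¹ * energy V s (QR d (n:ℝ))) atTop := by
          refine le_trans (limsup_le_of_mul (v := fun n : ℕ =>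
            (ENNReal.ofReal ((2*((n:ℝ)+1))^d))⁻¹ * energy V s (QR d ((n:ℝ)+1)))
            fun a ha => ?_) ?_
          · have hev := eventually_mul_N_le (c := -1) (d := d) ha
            have hten : Tendsto (fun n : ℕ => (n:ℝ) + 1) atTop atTop :=
              tendsto_atTop_add_const_right atTop 1 tendsto_natCast_atTop_atTop
            filter_upwards [hten.eventually hev] with n hn
            simp only [add_neg_cancel_right] at hn
            calc a * w n = (a * (ENNReal.ofReal ((2*(n:ℝ))^d))⁻¹)
                  * energy V s (QR d ((n:ℝ)+1)) := by rw [hw]; ring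
              _ ≤ (ENNReal.ofReal ((2*((n:ℝ)+1))^d))⁻¹ * energy V s (QR d ((n:ℝ)+1)) :=
                  mul_le_mul_left hn _
          · set f : ℕ → ℝ≥0∞ := fun n : ℕ =>
              (ENNReal.ofReal ((2*((n:ℕ):ℝ))^d))⁻¹ * energy V s (QR d ((n:ℕ):ℝ)) with hf
            have : (fun n : ℕ => (ENNReal.ofReal ((2*((n:ℝ)+1))^d))⁻¹
                * energy V s (QR d ((n:ℝ)+1))) = fun n : ℕ => f (n+1) := by
              funext n
              simp only [hf, Nat.cast_add_one]
            rw [this]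
            exact le_of_eq (Filter.limsup_nat_add f 1)
  · calc Filter.limsup (fun n : ℕ =>
          (ENNReal.ofReal ((2*(n:ℝ))^d))⁻¹ * energy V s (QR d (n:ℝ))) atTop
        = Filter.limsup g (Filter.map (fun n : ℕ => (n:ℝ)) atTop) :=
          Filter.limsup_comp g _ _
      _ ≤ Filter.limsup g atTop := limsup_le_limsup_of_le tendsto_natCast_atTop_atTop

/-- For an increment-stationary random point set, the normalized energy
`limsup` is invariant under the group action, and if the action is ergodic it is a.s. a
deterministic constant `e* ∈ [0,∞]`. -/
theorem statement1 {d : ℕ} {Ω : Type} [MeasurableSpace Ω] (P : Measure Ω)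
    [IsProbabilityMeasure P] (θ : Zd d → Ω → Ω)
    (hmp : ∀ k, MeasurePreserving (θ k) P P) (hid : θ 0 = id)
    (hgrp : ∀ k k', θ (k + k') = θ k ∘ θ k')
    (ℓ : Ω → Set (Rd d)) (hloc : ∀ ω, LocFin (ℓ ω))
    (Y : Zd d → Ω → Rd d) (hY2 : ∀ k, MemLp (Y k) 2 P)
    (hstat : ∀ᵐ ω ∂P, ∀ k, ℓ (θ k ω) = (fun x => x + Y k ω) '' ℓ ω)
    (hY0 : ∀ ω, Y 0 ω = 0)
    (hcoc : ∀ i j k : Zd d, ∀ᵐ ω ∂P,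
      Y j (θ k ω) - Y i (θ k ω) = Y (j + k) ω - Y (i + k) ω)
    (V : Rd d → ℝ) (hV : ∀ x, 0 ≤ V x)
    (hmeas : ∀ R : ℝ, Measurable fun ω => energy V (ℓ ω) (QR d R)) :
    (∀ k : Zd d, ∀ᵐ ω ∂P,
        Filter.limsup (fun R : ℝ =>
          (ENNReal.ofReal ((2*R)^d))⁻¹ * energy V (ℓ (θ k ω)) (QR d R)) Filter.atTop
        = Filter.limsup (fun R : ℝ =>
          (ENNReal.ofReal ((2*R)^d))⁻¹ * energy V (ℓ ω) (QR d R)) Filter.atTop) ∧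
    ((∀ A : Set Ω, MeasurableSet A → (∀ k, θ k ⁻¹' A = A) → P A = 0 ∨ P A = 1) →
      ∃ estar : ℝ≥0∞, ∀ᵐ ω ∂P,
        Filter.limsup (fun R : ℝ =>
          (ENNReal.ofReal ((2*R)^d))⁻¹ * energy V (ℓ ω) (QR d R)) Filter.atTop = estar) := by
  classical
  have part1 : ∀ k : Zd d, ∀ᵐ ω ∂P,
      Filter.limsup (fun R : ℝ =>
        (ENNReal.ofReal ((2*R)^d))⁻¹ * energy V (ℓ (θ k ω)) (QR d R)) Filter.atTop
      = Filter.limsup (fun R : ℝ =>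
        (ENNReal.ofReal ((2*R)^d))⁻¹ * energy V (ℓ ω) (QR d R)) Filter.atTop := by
    intro k
    filter_upwards [hstat] with ω hω
    set v : Rd d := Y k ω with hv
    set c : ℝ := ∑ i : Fin d, |v i| with hc
    have hvc : ∀ i, |v i| ≤ c := fun i =>
      Finset.single_le_sum (fun j _ => abs_nonneg (v j)) (Finset.mem_univ i)
    have htrans : ∀ R : ℝ, energy V (ℓ (θ k ω)) (QR d R)
        = energy V (ℓ ω) ((fun x => x + v) ⁻¹' QR d R) := by
      intro R
      rw [hω k, energy_translate]
    have hadd : ∀ (x : Rd d) (i : Fin d), (x + v) i = x i + v i := fun x i => rfl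
    have hsub1 : ∀ R : ℝ, QR d (R + -c) ⊆ (fun x => x + v) ⁻¹' QR d R := by
      intro R x hx
      intro i
      obtain ⟨h1, h2⟩ := hx i
      have h3 := hvc i
      have h4 := neg_abs_le (v i)
      have h5 := le_abs_self (v i)
      show -R ≤ (x + v) i ∧ (x + v) i < R
      rw [hadd x i]
      constructor
      · linarith
      · linarith
    have hsub2 : ∀ R : ℝ, (fun x => x + v) ⁻¹' QR d R ⊆ QR d (R + c) := by
      intro R x hx
      intro i
      have h1 : -R ≤ x i + v i := (hx i).1
      have h2 : x i + v i < R := (hx i).2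
      have h3 := hvc i
      have h4 := neg_abs_le (v i)
      have h5 := le_abs_self (v i)
      constructor
      · linarith
      · linarith
    have hle1 : ∀ R : ℝ, (ENNReal.ofReal ((2*R)^d))⁻¹ * energy V (ℓ ω) (QR d (R + -c))
        ≤ (ENNReal.ofReal ((2*R)^d))⁻¹ * energy V (ℓ (θ k ω)) (QR d R) := by
      intro R
      rw [htrans R]
      exact mul_le_mul_right (energy_mono V (ℓ ω) (hsub1 R)) _
    have hle2 : ∀ R : ℝ, (ENNReal.ofReal ((2*R)^d))⁻¹ * energy V (ℓ (θ k ω)) (QR d R)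
        ≤ (ENNReal.ofReal ((2*R)^d))⁻¹ * energy V (ℓ ω) (QR d (R + c)) := by
      intro R
      rw [htrans R]
      exact mul_le_mul_right (energy_mono V (ℓ ω) (hsub2 R)) _
    apply le_antisymm
    · calc Filter.limsup (fun R : ℝ =>
            (ENNReal.ofReal ((2*R)^d))⁻¹ * energy V (ℓ (θ k ω)) (QR d R)) atTop
          ≤ Filter.limsup (fun R : ℝ =>
            (ENNReal.ofReal ((2*R)^d))⁻¹ * energy V (ℓ ω) (QR d (R + c))) atTop :=
            limsup_le_limsup (Filter.Eventually.of_forall hle2)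
        _ = Filter.limsup (fun R : ℝ =>
            (ENNReal.ofReal ((2*R)^d))⁻¹ * energy V (ℓ ω) (QR d R)) atTop :=
            limsup_shift (fun t => energy V (ℓ ω) (QR d t)) c
    · calc Filter.limsup (fun R : ℝ =>
            (ENNReal.ofReal ((2*R)^d))⁻¹ * energy V (ℓ ω) (QR d R)) atTop
          = Filter.limsup (fun R : ℝ =>
            (ENNReal.ofReal ((2*R)^d))⁻¹ * energy V (ℓ ω) (QR d (R + -c))) atTop :=
            (limsup_shift (fun t => energy V (ℓ ω) (QR d t)) (-c)).symm
        _ ≤ Filter.limsup (fun R : ℝ =>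
            (ENNReal.ofReal ((2*R)^d))⁻¹ * energy V (ℓ (θ k ω)) (QR d R)) atTop :=
            limsup_le_limsup (Filter.Eventually.of_forall hle1)
  refine ⟨part1, ?_⟩
  intro herg
  set Λ : Ω → ℝ≥0∞ := fun ω => Filter.limsup (fun n : ℕ =>
    (ENNReal.ofReal ((2*(n:ℝ))^d))⁻¹ * energy V (ℓ ω) (QR d (n:ℝ))) atTop with hΛ
  have hfΛ : ∀ ω, Filter.limsup (fun R : ℝ =>
      (ENNReal.ofReal ((2*R)^d))⁻¹ * energy V (ℓ ω) (QR d R)) atTop = Λ ω :=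
    fun ω => limsup_real_eq_nat V (ℓ ω)
  have hΛmeas : Measurable Λ :=
    Measurable.limsup (fun n => (hmeas ((n:ℝ))).const_mul _)
  have hinv : ∀ k, ∀ᵐ ω ∂P, Λ (θ k ω) = Λ ω := by
    intro k
    filter_upwards [part1 k] with ω hω
    rw [← hfΛ, ← hfΛ, hω]
  set A : ℝ≥0∞ → Set Ω := fun t => {ω | Λ ω ≤ t} with hA
  have hAmeas : ∀ t, MeasurableSet (A t) := fun t => hΛmeas measurableSet_Iic
  have hnull : ∀ k t, P ((θ k ⁻¹' A t) \ A t) = 0 := by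
    intro k t
    have h0 : P {ω | ¬ Λ (θ k ω) = Λ ω} = 0 := by
      have h := hinv k
      rwa [ae_iff] at h
    refine measure_mono_null ?_ h0
    rintro ω ⟨h1, h2⟩
    have h1' : Λ (θ k ω) ≤ t := h1
    intro heq
    exact h2 (show Λ ω ≤ t from heq ▸ h1')
  have hdich : ∀ t, P (A t) = 0 ∨ P (A t) = 1 := by
    intro t
    set B : Set Ω := ⋃ k : Zd d, θ k ⁻¹' A t with hB
    have hBmeas : MeasurableSet B :=
      MeasurableSet.iUnion fun k => (hmp k).measurable (hAmeas t)
    have hBinv : ∀ j, θ j ⁻¹' B = B := by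
      intro j
      rw [hB, Set.preimage_iUnion]
      ext ω
      simp only [Set.mem_iUnion, Set.mem_preimage]
      constructor
      · rintro ⟨k, h⟩
        refine ⟨k + j, ?_⟩
        have he : θ (k + j) ω = θ k (θ j ω) := by rw [hgrp]; rfl
        rw [he]
        exact h
      · rintro ⟨k, h⟩
        refine ⟨k - j, ?_⟩
        have he : θ k ω = θ (k - j) (θ j ω) := by
          conv_lhs => rw [← sub_add_cancel k j, hgrp]
          rfl
        rw [← he]
        exact h
    have hPB : P B = P (A t) := by
      apply le_antisymm
      · have hsub : B ⊆ A t ∪ ⋃ k : Zd d, ((θ k ⁻¹' A t) \ A t) := by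
          intro ω hω
          rcases Set.mem_iUnion.1 hω with ⟨k, hk⟩
          by_cases h : ω ∈ A t
          · exact Or.inl h
          · exact Or.inr (Set.mem_iUnion.2 ⟨k, hk, h⟩)
        calc P B ≤ P (A t ∪ ⋃ k : Zd d, ((θ k ⁻¹' A t) \ A t)) := measure_mono hsub
          _ ≤ P (A t) + P (⋃ k : Zd d, ((θ k ⁻¹' A t) \ A t)) := measure_union_le _ _
          _ = P (A t) := by rw [measure_iUnion_null (fun k => hnull k t), add_zero]
      · apply measure_mono
        intro ω hω
        refine Set.mem_iUnion.2 ⟨0, ?_⟩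
        show θ 0 ω ∈ A t
        rw [hid]
        exact hω
    rcases herg B hBmeas hBinv with h | h
    · left; rw [← hPB]; exact h
    · right; rw [← hPB]; exact h
  set S : Set ℝ≥0∞ := {t | P (A t) = 1} with hS
  refine ⟨sInf S, ?_⟩
  have hupper : ∀ᵐ ω ∂P, Λ ω ≤ sInf S := by
    by_cases htop : sInf S = ⊤
    · exact Filter.Eventually.of_forall fun ω => htop ▸ le_top
    · have hchoice : ∀ n : ℕ, ∃ t ∈ S, t < sInf S + (n:ℝ≥0∞)⁻¹ := by
        intro n
        refine sInf_lt_iff.1 ?_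
        exact ENNReal.lt_add_right htop
          (ENNReal.inv_ne_zero.2 (ENNReal.natCast_ne_top n))
      choose t ht1 ht2 using hchoice
      have hae : ∀ n : ℕ, ∀ᵐ ω ∂P, Λ ω ≤ t n := by
        intro n
        have h1 : P (A (t n)) = 1 := ht1 n
        have h2 : P ((A (t n))ᶜ) = 0 := (prob_compl_eq_zero_iff (hAmeas (t n))).2 h1
        rw [ae_iff]
        have he : {ω | ¬ Λ ω ≤ t n} = (A (t n))ᶜ := by
          ext ω; simp [hA]
        rw [he]
        exact h2
      have hae' : ∀ᵐ ω ∂P, ∀ n : ℕ, Λ ω ≤ t n := ae_all_iff.2 hae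
      filter_upwards [hae'] with ω hω
      refine ENNReal.le_of_forall_pos_le_add fun ε hε _ => ?_
      obtain ⟨n, hn⟩ := ENNReal.exists_inv_nat_lt
        (show ((ε:ℝ≥0∞)) ≠ 0 by exact_mod_cast hε.ne')
      calc Λ ω ≤ t n := hω n
        _ ≤ sInf S + (n:ℝ≥0∞)⁻¹ := (ht2 n).le
        _ ≤ sInf S + ε := add_le_add le_rfl hn.le
  have hlower : ∀ᵐ ω ∂P, sInf S ≤ Λ ω := by
    set N : Set Ω := ⋃ q : ℚ,
      if ENNReal.ofReal (q:ℝ) < sInf S then A (ENNReal.ofReal (q:ℝ)) else ∅ with hN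
    have hNnull : P N = 0 := by
      refine measure_iUnion_null fun q => ?_
      split_ifs with h
      · rcases hdich (ENNReal.ofReal (q:ℝ)) with h0 | h1
        · exact h0
        · exact absurd (sInf_le (show ENNReal.ofReal (q:ℝ) ∈ S from h1)) (not_le.2 h)
      · exact measure_empty
    filter_upwards [measure_eq_zero_iff_ae_notMem.1 hNnull] with ω hω
    by_contra hcon
    push_neg at hcon
    obtain ⟨q, hq0, h1, h2⟩ := ENNReal.lt_iff_exists_rat_btwn.1 hcon
    have hco : ((Real.toNNReal (q:ℝ)) : ℝ≥0∞) = ENNReal.ofReal (q:ℝ) := rfl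
    apply hω
    refine Set.mem_iUnion.2 ⟨q, ?_⟩
    rw [if_pos (hco ▸ h2)]
    exact le_of_lt (hco ▸ h1)
  filter_upwards [hupper, hlower] with ω h1 h2
  rw [hfΛ]
  exact le_antisymm h1 h2
end
end

section
/- Let $(\Omega,\mathcal{F},\mathbb{P})$ be a probability space endowed with an ergodic measure-preserving $\mathbb{Z}^d$-group action $\{\theta_k\}_{k \in \mathbb{Z}^d}$, and let $\ell : \Omega \to \mathcal{L}(\mathbb{R}^d)$ be an increment-stationary random point set with associated random vectors $\{Y_k\}_{k \in \mathbb{Z}^d}$, and with $\phi_{\mu,i}$, $\zeta_i$, $Z_{e_l}$ defined as usual. Assume $\ell$ is non-degenerate (for almost every $\omega$: if $X \in \mathbb{R}^d$ satisfies $\ell(\omega) + X = \ell(\omega)$ then $X = 0$) and stationary up to translation, i.e. there exist $\tilde{Y} \in L^2(\Omega,\mathbb{R}^d)$ with $\mathbb{E}[\tilde{Y}] = 0$ and a deterministic matrix $T$ such that $\ell(\theta_k\omega) + \tilde{Y}(\theta_k\omega) = \ell(\omega) + \tilde{Y}(\omega) + Tk$ for all $k$ and almost every $\omega$. Then $\sup_{\mu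 > 0} \max_{i \in \{1,\dots,d\}} \mathbb{E}[\phi_{\mu,i}^2] < \infty$; more precisely, $\mathbb{E}[\phi_{\mu,i}^2] \le 4\,\mathbb{E}[(\tilde{Y} \cdot e_i)^2]$ for all $\mu > 0$ and $i$. -/
open MeasureTheory Filter
open scoped ENNReal BigOperators

noncomputable section

variable {d : ℕ}

/-- The difference operator `D_l ψ (ω) = ψ(θ_{e_l} ω) - ψ(ω)`. -/
def Dl {d : ℕ} {Ω : Type*} (θ : Zd d → Ω → Ω) (l : Fin d) (ψ : Ω → ℝ) (ω : Ω) : ℝ :=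
  ψ (θ (zbasis l) ω) - ψ ω

/-- `φ` is a weak solution in `L²(Ω)` of `E[μ φ ψ + Dψ · Dφ] = E[Dψ · ζ]` for all
`ψ ∈ L²(Ω)`. -/
def IsWeakSol {d : ℕ} {Ω : Type*} [MeasurableSpace Ω] (P : Measure Ω)
    (θ : Zd d → Ω → Ω) (μ : ℝ) (ζ : Ω → Rd d) (φ : Ω → ℝ) : Prop :=
  MemLp φ 2 P ∧ ∀ ψ : Ω → ℝ, MemLp ψ 2 P →
    ∫ ω, (μ * (φ ω * ψ ω) + ∑ l, Dl θ l ψ ω * Dl θ l φ ω) ∂P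
      = ∫ ω, (∑ l, Dl θ l ψ ω * ζ ω l) ∂P

private lemma memL1_mul {Ω : Type} [MeasurableSpace Ω] {P : Measure Ω}
    {f g : Ω → ℝ} (hf : MemLp f 2 P) (hg : MemLp g 2 P) :
    MeasureTheory.Integrable (fun ω => f ω * g ω) P := by
  have h : MemLp (f • g) 1 P := hg.smul hf
  exact memLp_one_iff_integrable.mp h

private lemma memL2_Dl {d : ℕ} {Ω : Type} [MeasurableSpace Ω] {P : Measure Ω}
    {θ : Zd d → Ω → Ω} (hmp : ∀ k, MeasurePreserving (θ k) P P)
    {ψ : Ω → ℝ} (hψ : MemLp ψ 2 P) (l : Fin d) :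
    MemLp (Dl θ l ψ) 2 P := by
  have : MemLp (fun ω => ψ (θ (zbasis l) ω) - ψ ω) 2 P :=
    (hψ.comp_measurePreserving (hmp (zbasis l))).sub hψ
  exact this

/-- (Proposition 1, converse direction.) If the non-degenerate
increment-stationary random point set `ℓ` is stationary up to translation (via `Ỹ`, `T`),
then the regularized correctors are bounded in `L²(Ω)` uniformly in `μ > 0`; more
precisely `E[φ_{μ,i}²] ≤ 4 E[(Ỹ · e_i)²]`. -/
theorem statement6 {d : ℕ} {Ω : Type} [MeasurableSpace Ω] (P : Measure Ω)
    [IsProbabilityMeasure P] (θ : Zd d → Ω → Ω)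
    (hmp : ∀ k, MeasurePreserving (θ k) P P) (hid : θ 0 = id)
    (hgrp : ∀ k k', θ (k + k') = θ k ∘ θ k')
    (herg : ∀ A : Set Ω, MeasurableSet A → (∀ k, θ k ⁻¹' A = A) → P A = 0 ∨ P A = 1)
    (ℓ : Ω → Set (Rd d)) (hloc : ∀ ω, LocFin (ℓ ω))
    (Y : Zd d → Ω → Rd d) (hY2 : ∀ k, MemLp (Y k) 2 P)
    (hstat : ∀ᵐ ω ∂P, ∀ k, ℓ (θ k ω) = (fun x => x + Y k ω) '' ℓ ω)
    (hY0 : ∀ ω, Y 0 ω = 0)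
    (hcoc : ∀ i j k : Zd d, ∀ᵐ ω ∂P,
      Y j (θ k ω) - Y i (θ k ω) = Y (j + k) ω - Y (i + k) ω)
    (hnd : ∀ᵐ ω ∂P, ∀ X : Rd d, (fun x => x + X) '' ℓ ω = ℓ ω → X = 0)
    (Ytil : Ω → Rd d) (hYtil2 : MemLp Ytil 2 P) (hYtilm : (∫ ω, Ytil ω ∂P) = 0)
    (T : Matrix (Fin d) (Fin d) ℝ)
    (hsut : ∀ k : Zd d, ∀ᵐ ω ∂P,
      (fun x => x + Ytil (θ k ω)) '' ℓ (θ k ω)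
        = (fun x => x + (Ytil ω + castR (T.mulVec fun i => (k i : ℝ)))) '' ℓ ω)
    (φ : ℝ → Fin d → Ω → ℝ)
    (hsol : ∀ μ : ℝ, 0 < μ → ∀ i : Fin d,
      IsWeakSol P θ μ
        (fun ω => castR fun l => Y (zbasis l) ω i - (∫ ω', Y (zbasis l) ω' ∂P) i)
        (φ μ i)) :
    (∃ C : ℝ, ∀ μ : ℝ, 0 < μ → ∀ i : Fin d, ∫ ω, (φ μ i ω) ^ 2 ∂P ≤ C) ∧
    (∀ μ : ℝ, 0 < μ → ∀ i : Fin d,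
      ∫ ω, (φ μ i ω) ^ 2 ∂P ≤ 4 * ∫ ω, (Ytil ω i) ^ 2 ∂P) := by
  classical
  -- Step 1: a.e. identity `Y k = Ỹ + Tk - Ỹ ∘ θ k`, from non-degeneracy.
  have hYk : ∀ k : Zd d, ∀ᵐ ω ∂P,
      Y k ω = Ytil ω + castR (T.mulVec fun i => (k i : ℝ)) - Ytil (θ k ω) := by
    intro k
    filter_upwards [hstat, hsut k, hnd] with ω h1 h2 h3
    set V : Rd d := Ytil ω + castR (T.mulVec fun i => (k i : ℝ)) with hVdef
    set A : Rd d := Ytil (θ k ω) with hAdef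
    set B : Rd d := Y k ω with hBdef
    have himg : (fun x => x + (B + A)) '' ℓ ω = (fun x => x + V) '' ℓ ω := by
      rw [← h2, h1 k, Set.image_image]
      have : (fun x : Rd d => x + (B + A)) = fun x => x + B + A := by
        funext x; rw [add_assoc]
      rw [this]
    have himg2 : (fun x => x + (B + A - V)) '' ℓ ω = ℓ ω := by
      have h4 := congrArg (Set.image (fun x : Rd d => x + (-V))) himg
      rw [Set.image_image, Set.image_image] at h4
      have e1 : (fun x : Rd d => x + (B + A) + -V) = fun x => x + (B + A - V) := by
        funext x; abel
      have e2 : (fun x : Rd d => x + V + -V) = fun x => x := by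
        funext x; abel
      rw [e1, e2, Set.image_id'] at h4
      exact h4
    have h0 : B + A = V := sub_eq_zero.mp (h3 _ himg2)
    exact eq_sub_of_add_eq h0
  -- Main L² bound.
  have key : ∀ μ' : ℝ, 0 < μ' → ∀ i : Fin d,
      ∫ ω, (φ μ' i ω) ^ 2 ∂P ≤ 4 * ∫ ω, (Ytil ω i) ^ 2 ∂P := by
    intro μ hμ i
    obtain ⟨hφ2, heq⟩ := hsol μ hμ i
    set φ' : Ω → ℝ := φ μ i with hφ'def
    set gi : Ω → ℝ := fun ω => Ytil ω i with hgidef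
    have hgi2 : MemLp gi 2 P := by
      have : MemLp ((EuclideanSpace.proj (𝕜 := ℝ) i) ∘ Ytil) 2 P :=
        (EuclideanSpace.proj (𝕜 := ℝ) i).comp_memLp' hYtil2
      exact this
    have hgiint : Integrable gi P := hgi2.integrable one_le_two
    set c : Fin d → ℝ := fun l => T.mulVec (fun j => ((zbasis l j : ℤ) : ℝ)) i with hcdef
    -- componentwise a.e. identity
    have hcomp : ∀ l : Fin d, ∀ᵐ ω ∂P,
        Y (zbasis l) ω i = gi ω + c l - gi (θ (zbasis l) ω) := by
      intro l
      filter_upwards [hYk (zbasis l)] with ω hω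
      have := congrArg (fun v : Rd d => v i) hω
      simpa [castR, PiLp.sub_apply, PiLp.add_apply, hgidef, hcdef] using this
    -- expectations
    have hgi0 : ∫ ω, gi ω ∂P = 0 := by
      have h := (EuclideanSpace.proj (𝕜 := ℝ) i).integral_comp_comm
        (hYtil2.integrable one_le_two)
      rw [hYtilm] at h
      simpa [hgidef] using h
    have hgicomp : ∀ k : Zd d, ∫ ω, gi (θ k ω) ∂P = 0 := by
      intro k
      have hmap := (hmp k).map_eq
      calc ∫ ω, gi (θ k ω) ∂P
          = ∫ x, gi x ∂(Measure.map (θ k) P) :=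
            (integral_map (hmp k).measurable.aemeasurable
              (by rw [hmap]; exact hgi2.1)).symm
        _ = 0 := by rw [hmap]; exact hgi0
    have hintY : ∀ l : Fin d, (∫ ω', Y (zbasis l) ω' ∂P) i = c l := by
      intro l
      have hYint : Integrable (Y (zbasis l)) P := (hY2 (zbasis l)).integrable one_le_two
      have hproj := (EuclideanSpace.proj (𝕜 := ℝ) i).integral_comp_comm hYint
      have h1 : (∫ ω', Y (zbasis l) ω' ∂P) i = ∫ ω, Y (zbasis l) ω i ∂P := by
        simpa using hproj.symm
      rw [h1]
      have h2 : ∫ ω, Y (zbasis l) ω i ∂P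
          = ∫ ω, (gi ω + c l - gi (θ (zbasis l) ω)) ∂P :=
        integral_congr_ae (hcomp l)
      have hgk : Integrable (fun ω => gi (θ (zbasis l) ω)) P :=
        (hgi2.comp_measurePreserving (hmp _)).integrable one_le_two
      have hadd : Integrable (fun ω => gi ω + c l) P := hgiint.add (integrable_const _)
      have h3 : ∫ ω, (gi ω + c l - gi (θ (zbasis l) ω)) ∂P
          = (∫ ω, (gi ω + c l) ∂P) - ∫ ω, gi (θ (zbasis l) ω) ∂P :=
        integral_sub hadd hgk
      have h4 : ∫ ω, (gi ω + c l) ∂P = (∫ ω, gi ω ∂P) + ∫ (_ : Ω), c l ∂P :=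
        integral_add hgiint (integrable_const _)
      rw [h2, h3, h4, hgi0, hgicomp]
      simp
    -- the flux is (minus) a gradient
    have hζ : ∀ᵐ ω ∂P, ∀ l : Fin d,
        Y (zbasis l) ω i - (∫ ω', Y (zbasis l) ω' ∂P) i = -(Dl θ l gi ω) := by
      rw [ae_all_iff]
      intro l
      filter_upwards [hcomp l] with ω hω
      rw [hω, hintY l]
      simp [Dl]
      ring
    -- test function ψ = φ' + gi
    set ψ : Ω → ℝ := fun ω => φ' ω + gi ω with hψdef
    have hψ2 : MemLp ψ 2 P := hφ2.add hgi2
    have hDφ : ∀ l, MemLp (Dl θ l φ') 2 P := fun l => memL2_Dl hmp hφ2 l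
    have hDg : ∀ l, MemLp (Dl θ l gi) 2 P := fun l => memL2_Dl hmp hgi2 l
    have hDψ : ∀ l, MemLp (Dl θ l ψ) 2 P := fun l => memL2_Dl hmp hψ2 l
    have hI1 : Integrable (fun ω => μ * (φ' ω * ψ ω)) P :=
      (memL1_mul hφ2 hψ2).const_mul μ
    have hI2 : Integrable (fun ω => ∑ l, Dl θ l ψ ω * Dl θ l φ' ω) P :=
      integrable_finset_sum _ (fun l _ => memL1_mul (hDψ l) (hDφ l))
    have hI3 : Integrable (fun ω => ∑ l, Dl θ l ψ ω * Dl θ l gi ω) P :=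
      integrable_finset_sum _ (fun l _ => memL1_mul (hDψ l) (hDg l))
    have hmain := heq ψ hψ2
    have hRHSval : ∫ ω, (∑ l, Dl θ l ψ ω *
          (castR fun l => Y (zbasis l) ω i - (∫ ω', Y (zbasis l) ω' ∂P) i) l) ∂P
        = - ∫ ω, (∑ l, Dl θ l ψ ω * Dl θ l gi ω) ∂P := by
      rw [← integral_neg]
      apply integral_congr_ae
      filter_upwards [hζ] with ω hω
      rw [← Finset.sum_neg_distrib]
      apply Finset.sum_congr rfl
      intro l _
      have : (castR fun l => Y (zbasis l) ω i - (∫ ω', Y (zbasis l) ω' ∂P) i) l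
          = -(Dl θ l gi ω) := hω l
      rw [this]
      ring
    have hkey : ∫ ω, (μ * (φ' ω * ψ ω) + ∑ l, Dl θ l ψ ω * Dl θ l φ' ω) ∂P
        = - ∫ ω, (∑ l, Dl θ l ψ ω * Dl θ l gi ω) ∂P := hmain.trans hRHSval
    -- combine the three integrals into one
    have hIQ : Integrable (fun ω => ∑ l, (Dl θ l ψ ω) ^ 2) P :=
      integrable_finset_sum _ (fun l _ => by simpa [sq] using memL1_mul (hDψ l) (hDψ l))
    have hcombine : ∫ ω, (μ * (φ' ω * ψ ω) + ∑ l, (Dl θ l ψ ω) ^ 2) ∂P = 0 := by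
      have e : (fun ω => μ * (φ' ω * ψ ω) + ∑ l, (Dl θ l ψ ω) ^ 2)
          = fun ω => (μ * (φ' ω * ψ ω) + ∑ l, Dl θ l ψ ω * Dl θ l φ' ω)
              + ∑ l, Dl θ l ψ ω * Dl θ l gi ω := by
        funext ω
        rw [add_assoc, ← Finset.sum_add_distrib]
        congr 1
        apply Finset.sum_congr rfl
        intro l _
        have hD : Dl θ l ψ ω = Dl θ l φ' ω + Dl θ l gi ω := by
          simp only [Dl, hψdef]
          ring
        rw [hD]
        ring
      have hIadd : Integrable
          (fun ω => μ * (φ' ω * ψ ω) + ∑ l, Dl θ l ψ ω * Dl θ l φ' ω) P := hI1.add hI2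
      rw [e, integral_add hIadd hI3, hkey]
      ring
    rw [integral_add hI1 hIQ, integral_const_mul] at hcombine
    have hQ0 : 0 ≤ ∫ ω, ∑ l, (Dl θ l ψ ω) ^ 2 ∂P :=
      integral_nonneg fun ω => Finset.sum_nonneg fun l _ => sq_nonneg _
    have h1 : μ * ∫ ω, φ' ω * ψ ω ∂P ≤ 0 := by linarith
    have h2 : ∫ ω, φ' ω * ψ ω ∂P ≤ 0 := by
      by_contra h
      push_neg at h
      nlinarith
    -- split the integral
    have hsq1 : Integrable (fun ω => (φ' ω) ^ 2) P := by
      simpa [sq] using memL1_mul hφ2 hφ2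
    have hsq2 : Integrable (fun ω => (gi ω) ^ 2) P := by
      simpa [sq] using memL1_mul hgi2 hgi2
    have hpg : Integrable (fun ω => φ' ω * gi ω) P := memL1_mul hφ2 hgi2
    have hsplit : ∫ ω, φ' ω * ψ ω ∂P
        = ∫ ω, (φ' ω) ^ 2 ∂P + ∫ ω, φ' ω * gi ω ∂P := by
      rw [← integral_add hsq1 hpg]
      apply integral_congr_ae
      filter_upwards with ω
      simp only [hψdef]
      ring
    have hbound : ∫ ω, -(φ' ω * gi ω) ∂P
        ≤ ∫ ω, (1/2 : ℝ) * ((φ' ω) ^ 2 + (gi ω) ^ 2) ∂P := by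
      refine integral_mono hpg.neg ((hsq1.add hsq2).const_mul (1/2 : ℝ)) fun ω => ?_
      simp only [Pi.neg_apply, Pi.add_apply]
      nlinarith [sq_nonneg (φ' ω + gi ω)]
    rw [integral_neg, integral_const_mul, integral_add hsq1 hsq2] at hbound
    have hg0 : 0 ≤ ∫ ω, (gi ω) ^ 2 ∂P := integral_nonneg fun ω => sq_nonneg _
    have hfin : ∫ ω, (φ' ω) ^ 2 ∂P ≤ 4 * ∫ ω, (gi ω) ^ 2 ∂P := by
      rw [hsplit] at h2
      linarith
    have hgoal : ∫ ω, (gi ω) ^ 2 ∂P = ∫ ω, (Ytil ω i) ^ 2 ∂P := by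
      simp only [hgidef]
    rw [hgoal] at hfin
    exact hfin
  refine ⟨⟨∑ j : Fin d, 4 * ∫ ω, (Ytil ω j) ^ 2 ∂P, ?_⟩, key⟩
  intro μ hμ i
  refine (key μ hμ i).trans ?_
  exact Finset.single_le_sum (f := fun j => 4 * ∫ ω, (Ytil ω j) ^ 2 ∂P)
    (fun j _ => mul_nonneg (by norm_num) (integral_nonneg fun ω => sq_nonneg _))
    (Finset.mem_univ i)
end
end

section
/- Let $d \in \{1,2\}$. For $\mu > 0$ let $G_\mu \in \ell^2(\mathbb{Z}^d)$ be the Green's function of $\mu - \triangle$ on $\mathbb{Z}^d$, i.e. the unique $\ell^2$ solution of $\mu\,G_\mu - \triangle G_\mu = \delta$, and let $\partial G_\mu = (\partial_1 G_\mu, \dots, \partial_d G_\mu)$ with $\partial_l u(x) := u(x+e_l) - u(x)$. Then $\sup_{0 < \mu \le 1} \sum_{y \in \mathbb{Z}^d} |\partial G_\mu(y)|^2 = \infty$; that is, the family $\{\partial G_\mu\}_{0 < \mu \le 1}$ is not bounded in $\ell^2(\mathbb{Z}^d,\mathbb{R}^d)$. -/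
set_option maxHeartbeats 1000000


open MeasureTheory Filter
open scoped ENNReal BigOperators

noncomputable section

variable {d : ℕ}

/-- The discrete Laplacian on `ℤ^d`. -/
def discLap {d : ℕ} (u : Zd d → ℝ) (x : Zd d) : ℝ :=
  ∑ l, (u (x + zbasis l) + u (x - zbasis l) - 2 * u x)

/- The discrete Dirac mass at the origin of `ℤ^d`. -/
open Classical in
def ddelta {d : ℕ} (x : Zd d) : ℝ := if x = 0 then 1 else 0

namespace S11

def xnorm {d : ℕ} (x : Zd d) : ℕ := Finset.univ.sup fun i => (x i).natAbs

def Dfun (m r : ℕ) : ℝ := if 1 ≤ r ∧ Nat.log 2 r < m then ((2:ℝ)^(Nat.log 2 r))⁻¹ / m else 0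

def ffun (m r : ℕ) : ℝ := ∑ j ∈ Finset.Ico r (2^m), Dfun m j

lemma Dfun_nonneg (m r : ℕ) : 0 ≤ Dfun m r := by
  unfold Dfun; split <;> positivity

lemma Dfun_zero_of_ge {m r : ℕ} (h : 2^m ≤ r) : Dfun m r = 0 := by
  unfold Dfun
  rw [if_neg]
  rintro ⟨h1, h2⟩
  have : r < 2 ^ m := (Nat.log_lt_iff_lt_pow one_lt_two (by omega)).symm.2 h2
  omega

lemma Dfun_le {m r : ℕ} (hm : 1 ≤ m) : Dfun m r ≤ 2 / (m * (r+1)) := by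
  unfold Dfun
  split
  · rename_i h
    obtain ⟨h1, h2⟩ := h
    have hr2 : r < 2 ^ (Nat.log 2 r + 1) := Nat.lt_pow_succ_log_self one_lt_two r
    have hle : (r:ℝ) + 1 ≤ 2 ^ (Nat.log 2 r + 1) := by
      have : (r + 1 : ℕ) ≤ 2 ^ (Nat.log 2 r + 1) := hr2
      exact_mod_cast this
    rw [div_le_div_iff₀ (by positivity) (by positivity)]
    have h2pow : ((2:ℝ) ^ (Nat.log 2 r + 1)) = 2 * 2 ^ (Nat.log 2 r) := by ring
    have hpos : (0:ℝ) < 2 ^ (Nat.log 2 r) := by positivity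
    rw [inv_mul_eq_div, div_le_iff₀ hpos] at *
    nlinarith [hle, hpos]
  · positivity

lemma ffun_sub (m r : ℕ) : ffun m r - ffun m (r+1) = Dfun m r := by
  unfold ffun
  rcases lt_or_ge r (2^m) with h | h
  · rw [Finset.sum_eq_sum_Ico_succ_bot h]
    ring
  · rw [Finset.Ico_eq_empty (by omega), Finset.Ico_eq_empty (by omega)]
    simp [Dfun_zero_of_ge h]

lemma ffun_zero_of_ge {m r : ℕ} (h : 2^m ≤ r) : ffun m r = 0 := by
  unfold ffun; rw [Finset.Ico_eq_empty (by omega)]; simp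

def Efun (j : ℕ) : ℝ := if 1 ≤ j then ((2:ℝ)^(Nat.log 2 j))⁻¹ else 0

lemma Esum (m : ℕ) : ∑ j ∈ Finset.range (2^m), Efun j = m := by
  induction m with
  | zero => simp [Efun]
  | succ m ih =>
    have hsplit : Finset.range (2^(m+1)) = Finset.range (2^m) ∪ Finset.Ico (2^m) (2^(m+1)) := by
      rw [Finset.range_eq_Ico, Finset.range_eq_Ico, Finset.Ico_union_Ico_eq_Ico (Nat.zero_le _)
        (Nat.pow_le_pow_right (by omega) (by omega))]
    rw [hsplit, Finset.sum_union (by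
      rw [Finset.range_eq_Ico]
      exact Finset.Ico_disjoint_Ico_consecutive 0 (2^m) (2^(m+1)))]
    rw [ih]
    have : ∀ j ∈ Finset.Ico (2^m) (2^(m+1)), Efun j = ((2:ℝ)^m)⁻¹ := by
      intro j hj
      rw [Finset.mem_Ico] at hj
      have hlog : Nat.log 2 j = m := Nat.log_eq_of_pow_le_of_lt_pow hj.1 hj.2
      have h1 : 1 ≤ j := le_trans (Nat.one_le_two_pow) hj.1
      simp [Efun, hlog, h1]
    rw [Finset.sum_congr rfl this, Finset.sum_const, Nat.card_Ico]
    have : (2^(m+1) - 2^m : ℕ) = 2^m := by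
      have : 2^(m+1) = 2 * 2^m := by ring
      omega
    rw [this]
    rw [nsmul_eq_mul]
    push_cast
    field_simp

lemma ffun_zero (m : ℕ) (hm : 1 ≤ m) : ffun m 0 = 1 := by
  unfold ffun
  have : ∀ j ∈ Finset.Ico 0 (2^m), Dfun m j = Efun j / m := by
    intro j hj
    rw [Finset.mem_Ico] at hj
    unfold Dfun Efun
    rcases Nat.eq_zero_or_pos j with h0 | h1
    · subst h0; simp
    · have hlog : Nat.log 2 j < m := (Nat.log_lt_iff_lt_pow one_lt_two (by omega)).symm.1 hj.2
      rw [if_pos ⟨h1, hlog⟩, if_pos (by omega : 1 ≤ j)]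
  rw [Finset.sum_congr rfl this, ← Finset.sum_div]
  rw [show Finset.Ico 0 (2^m) = Finset.range (2^m) from (Finset.range_eq_Ico _).symm, Esum]
  field_simp



lemma xnorm_le_iff {d : ℕ} (x : Zd d) (R : ℕ) : xnorm x ≤ R ↔ ∀ i, (x i).natAbs ≤ R := by
  unfold xnorm
  rw [Finset.sup_le_iff]
  simp

lemma xnorm_zero {d : ℕ} : xnorm (0 : Zd d) = 0 := by
  have := (xnorm_le_iff (0 : Zd d) 0).2 (fun i => by simp)
  omega

lemma natAbs_zbasis {d : ℕ} (l i : Fin d) : ((zbasis l i)).natAbs ≤ 1 := by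
  unfold zbasis
  rcases eq_or_ne i l with h | h
  · subst h; simp
  · rw [Pi.single_apply, if_neg h]; simp

lemma xnorm_add_le {d : ℕ} (x v : Zd d) (hv : ∀ i, (v i).natAbs ≤ 1) :
    xnorm (x + v) ≤ xnorm x + 1 := by
  rw [xnorm_le_iff]
  intro i
  have h1 : (x i).natAbs ≤ xnorm x := Finset.le_sup (f := fun i => (x i).natAbs) (Finset.mem_univ i)
  have := hv i
  have : ((x + v) i).natAbs = (x i + v i).natAbs := rfl
  rw [this]
  calc (x i + v i).natAbs ≤ (x i).natAbs + (v i).natAbs := Int.natAbs_add_le _ _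
    _ ≤ xnorm x + 1 := by omega

lemma xnorm_diff {d : ℕ} (x : Zd d) (l : Fin d) :
    xnorm (x + zbasis l) ≤ xnorm x + 1 ∧ xnorm x ≤ xnorm (x + zbasis l) + 1 := by
  constructor
  · exact xnorm_add_le x _ (natAbs_zbasis l)
  · have : x = (x + zbasis l) + (-zbasis l) := by abel
    nth_rewrite 1 [this]
    exact xnorm_add_le _ _ (fun i => by rw [Pi.neg_apply, Int.natAbs_neg]; exact natAbs_zbasis l i)

def Box (d R : ℕ) : Finset (Zd d) := Fintype.piFinset fun _ => Finset.Icc (-(R:ℤ)) (R:ℤ)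

lemma mem_Box {d R : ℕ} (x : Zd d) : x ∈ Box d R ↔ xnorm x ≤ R := by
  unfold Box
  rw [Fintype.mem_piFinset, xnorm_le_iff]
  apply forall_congr'
  intro i
  rw [Finset.mem_Icc]
  omega

lemma card_Box (d R : ℕ) : (Box d R).card = (2*R+1)^d := by
  unfold Box
  rw [Fintype.card_piFinset]
  have : ∀ i : Fin d, (Finset.Icc (-(R:ℤ)) (R:ℤ)).card = 2*R+1 := by
    intro i
    rw [Int.card_Icc]
    omega
  rw [Finset.prod_congr rfl (fun i _ => this i)]
  simp

lemma sphere_card {d : ℕ} (hd : d = 1 ∨ d = 2) (R r : ℕ) :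
    ((Box d R).filter (fun x => xnorm x = r)).card ≤ 8 * (r + 1) := by
  rcases Nat.eq_zero_or_pos r with h0 | h1
  · subst h0
    have hsub : (Box d R).filter (fun x => xnorm x = 0) ⊆ Box d 0 := by
      intro x hx
      rw [Finset.mem_filter] at hx
      rw [mem_Box, hx.2]
    calc _ ≤ (Box d 0).card := Finset.card_le_card hsub
      _ = (2*0+1)^d := card_Box d 0
      _ ≤ 8 * (0+1) := by rcases hd with h | h <;> subst h <;> norm_num
  · have hsub : (Box d R).filter (fun x => xnorm x = r) ⊆ Box d r \ Box d (r-1) := by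
      intro x hx
      rw [Finset.mem_filter] at hx
      rw [Finset.mem_sdiff, mem_Box, mem_Box, hx.2]
      omega
    have hBsub : Box d (r-1) ⊆ Box d r := by
      intro x hx; rw [mem_Box] at *; omega
    calc _ ≤ (Box d r \ Box d (r-1)).card := Finset.card_le_card hsub
      _ = (Box d r).card - (Box d (r-1)).card := Finset.card_sdiff_of_subset hBsub
      _ = (2*r+1)^d - (2*(r-1)+1)^d := by rw [card_Box, card_Box]
      _ ≤ 8 * (r + 1) := by
          rcases hd with h | h <;> subst h
          · simp only [pow_one]; omega
          · have h2 : 2*(r-1)+1 = 2*r-1 := by omega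
            rw [h2]
            rw [Nat.sub_le_iff_le_add]
            cases' Nat.exists_eq_add_of_le h1 with s hs
            subst hs
            have h3 : 2 * (Nat.succ 0 + s) - 1 = 2*s + 1 := by omega
            rw [h3]
            ring_nf
            nlinarith [sq_nonneg s]

lemma harmonic_le (m : ℕ) : ∑ r ∈ Finset.range (2^m), (1:ℝ)/(r+1) ≤ m + 1 := by
  induction m with
  | zero => norm_num
  | succ m ih =>
    have hsplit : Finset.range (2^(m+1)) = Finset.range (2^m) ∪ Finset.Ico (2^m) (2^(m+1)) := by
      rw [Finset.range_eq_Ico, Finset.range_eq_Ico, Finset.Ico_union_Ico_eq_Ico (Nat.zero_le _)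
        (Nat.pow_le_pow_right (by omega) (by omega))]
    rw [hsplit, Finset.sum_union (by
      rw [Finset.range_eq_Ico]
      exact Finset.Ico_disjoint_Ico_consecutive 0 (2^m) (2^(m+1)))]
    have hbound : ∑ r ∈ (Finset.Ico (2^m) (2^(m+1)) : Finset ℕ), (1:ℝ)/(r+1) ≤ 1 := by
      have : ∀ r ∈ Finset.Ico (2^m : ℕ) (2^(m+1) : ℕ), (1:ℝ)/(r+1) ≤ ((2:ℝ)^m)⁻¹ := by
        intro r hr
        rw [Finset.mem_Ico] at hr
        rw [one_div]
        apply inv_anti₀ (by positivity)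
        have : (2^m : ℕ) ≤ r + 1 := by omega
        calc ((2:ℝ)^m) = ((2^m : ℕ) : ℝ) := by push_cast; ring
          _ ≤ r + 1 := by exact_mod_cast this
      calc ∑ r ∈ (Finset.Ico (2^m) (2^(m+1)) : Finset ℕ), (1:ℝ)/(r+1)
          ≤ (Finset.Ico (2^m) (2^(m+1)) : Finset ℕ).card • ((2:ℝ)^m)⁻¹ :=
            Finset.sum_le_card_nsmul _ _ _ this
        _ = 1 := by
            rw [Nat.card_Ico]
            have h2 : (2^(m+1) - 2^m : ℕ) = 2^m := by
              have : (2:ℕ)^(m+1) = 2 * 2^m := by ring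
              omega
            rw [h2, nsmul_eq_mul]
            push_cast
            field_simp
    push_cast
    linarith

def phi (d m : ℕ) (x : Zd d) : ℝ := ffun m (xnorm x)

lemma grad_sq_le (d m : ℕ) (x : Zd d) (l : Fin d) :
    (phi d m (x + zbasis l) - phi d m x)^2 ≤ Dfun m (xnorm x - 1)^2 + Dfun m (xnorm x)^2 := by
  obtain ⟨h1, h2⟩ := xnorm_diff x l
  unfold phi
  rcases (by omega : xnorm (x + zbasis l) = xnorm x ∨ xnorm (x + zbasis l) = xnorm x + 1 ∨
      (1 ≤ xnorm x ∧ xnorm (x + zbasis l) = xnorm x - 1)) with h | h | ⟨hr, h⟩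
  · rw [h]; simp; positivity
  · rw [h]
    have : ffun m (xnorm x + 1) - ffun m (xnorm x) = -(Dfun m (xnorm x)) := by
      rw [← ffun_sub m (xnorm x)]; ring
    rw [this, neg_sq]
    have := sq_nonneg (Dfun m (xnorm x - 1))
    linarith
  · rw [h]
    have hx : xnorm x - 1 + 1 = xnorm x := by omega
    have : ffun m (xnorm x - 1) - ffun m (xnorm x) = Dfun m (xnorm x - 1) := by
      rw [← ffun_sub m (xnorm x - 1), hx]
    rw [this]
    have := sq_nonneg (Dfun m (xnorm x))
    linarith

lemma term_le {m : ℕ} (hm : 1 ≤ m) (r : ℕ) :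
    ((r:ℝ)+1) * (Dfun m (r-1)^2 + Dfun m r^2) ≤ 20/((m:ℝ)^2 * (r+1)) := by
  have hmpos : (0:ℝ) < m := by exact_mod_cast hm
  have hrpos : (0:ℝ) < (r:ℝ) + 1 := by positivity
  have hA : Dfun m r ≤ 2 / (m * (r+1)) := Dfun_le hm
  have hA0 : 0 ≤ Dfun m r := Dfun_nonneg m r
  have hAsq : ((r:ℝ)+1) * Dfun m r^2 ≤ 4/((m:ℝ)^2 * (r+1)) := by
    have h1 : Dfun m r^2 ≤ (2 / (m * (r+1)))^2 := by nlinarith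
    have h2 : ((r:ℝ)+1) * (2 / (m * (r+1)))^2 = 4/((m:ℝ)^2 * (r+1)) := by
      field_simp; ring
    nlinarith
  have hBsq : ((r:ℝ)+1) * Dfun m (r-1)^2 ≤ 16/((m:ℝ)^2 * (r+1)) := by
    rcases Nat.eq_zero_or_pos r with h0 | h1
    · subst h0
      have : Dfun m 0 = 0 := by unfold Dfun; rw [if_neg]; rintro ⟨h, _⟩; omega
      simp only [Nat.zero_sub, this]
      norm_num
      positivity
    · have hB : Dfun m (r-1) ≤ 2 / (m * ((r-1:ℕ)+1)) := Dfun_le hm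
      have hcast : ((r-1:ℕ):ℝ) + 1 = r := by
        rw [Nat.cast_sub h1]; push_cast; ring
      rw [hcast] at hB
      have hB0 : 0 ≤ Dfun m (r-1) := Dfun_nonneg m _
      have hrR : (1:ℝ) ≤ (r:ℝ) := by exact_mod_cast h1
      have h1' : Dfun m (r-1)^2 ≤ (2 / (m * r))^2 := by nlinarith
      have h2' : ((r:ℝ)+1) * (2 / (m * r))^2 ≤ 16/((m:ℝ)^2 * (r+1)) := by
        have heq : ((r:ℝ)+1) * (2 / (m * r))^2 = (4*((r:ℝ)+1)) / ((m*r)^2) := by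
          field_simp; ring
        rw [heq, div_le_div_iff₀ (by positivity) (by positivity)]
        have h4 : ((r:ℝ)+1)^2 ≤ 4 * r^2 := by nlinarith
        have hexp : ((m:ℝ) * r)^2 = m^2 * r^2 := by ring
        nlinarith [sq_nonneg ((m:ℝ)), hmpos]
      nlinarith
  have heq : 4/((m:ℝ)^2 * (r+1)) + 16/((m:ℝ)^2 * (r+1)) = 20/((m:ℝ)^2 * (r+1)) := by
    ring
  nlinarith

lemma phi_zero_of_far {d m : ℕ} {x : Zd d} (h : 2^m ≤ xnorm x) : phi d m x = 0 :=
  ffun_zero_of_ge h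

lemma energy_le {d : ℕ} (hd : d = 1 ∨ d = 2) {m : ℕ} (hm : 1 ≤ m) (T : Finset (Zd d)) :
    ∑ x ∈ T, ∑ l, (phi d m (x + zbasis l) - phi d m x)^2 ≤ 320 * ((m:ℝ)+3) / m^2 := by
  classical
  set g : Zd d → ℝ := fun x => ∑ l, (phi d m (x + zbasis l) - phi d m x)^2 with hg
  have hgnn : ∀ x, 0 ≤ g x := fun x => Finset.sum_nonneg fun l _ => sq_nonneg _
  set B' : Finset (Zd d) := Box d (2^m + 1) with hB'
  have hgz : ∀ x ∉ B', g x = 0 := by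
    intro x hx
    rw [hB', mem_Box] at hx
    push_neg at hx
    have hxn : 2^m + 2 ≤ xnorm x := hx
    apply Finset.sum_eq_zero
    intro l _
    have h2 := (xnorm_diff x l).2
    rw [phi_zero_of_far (by omega), phi_zero_of_far (by omega)]
    norm_num
  have hstep1 : ∑ x ∈ T, g x ≤ ∑ x ∈ B', g x := by
    calc ∑ x ∈ T, g x ≤ ∑ x ∈ T ∪ B', g x :=
          Finset.sum_le_sum_of_subset_of_nonneg Finset.subset_union_left
            (fun x _ _ => hgnn x)
      _ = ∑ x ∈ B', g x := by
          refine (Finset.sum_subset Finset.subset_union_right ?_).symm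
          intro x _ hx
          exact hgz x hx
  have hd2 : (d:ℝ) ≤ 2 := by rcases hd with h | h <;> subst h <;> norm_num
  have hpt : ∀ x, g x ≤ 2 * (Dfun m (xnorm x - 1)^2 + Dfun m (xnorm x)^2) := by
    intro x
    have : g x ≤ ∑ _l : Fin d, (Dfun m (xnorm x - 1)^2 + Dfun m (xnorm x)^2) :=
      Finset.sum_le_sum fun l _ => grad_sq_le d m x l
    rw [Finset.sum_const, Finset.card_univ, Fintype.card_fin, nsmul_eq_mul] at this
    have hnn : (0:ℝ) ≤ Dfun m (xnorm x - 1)^2 + Dfun m (xnorm x)^2 := by positivity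
    nlinarith
  set h : ℕ → ℝ := fun r => 2 * (Dfun m (r - 1)^2 + Dfun m r^2) with hh
  have hhnn : ∀ r, 0 ≤ h r := fun r => by rw [hh]; positivity
  have hstep2 : ∑ x ∈ B', g x ≤ ∑ r ∈ Finset.range (2^m + 2), 8*((r:ℝ)+1) * h r := by
    have hmap : ∀ x ∈ B', xnorm x ∈ Finset.range (2^m + 2) := by
      intro x hx
      rw [hB', mem_Box] at hx
      rw [Finset.mem_range]
      omega
    calc ∑ x ∈ B', g x ≤ ∑ x ∈ B', h (xnorm x) := Finset.sum_le_sum fun x _ => hpt x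
      _ = ∑ r ∈ Finset.range (2^m + 2), ∑ x ∈ B'.filter (fun x => xnorm x = r), h (xnorm x) :=
          (Finset.sum_fiberwise_of_maps_to hmap _).symm
      _ ≤ ∑ r ∈ Finset.range (2^m + 2), 8*((r:ℝ)+1) * h r := by
          apply Finset.sum_le_sum
          intro r _
          have : ∑ x ∈ B'.filter (fun x => xnorm x = r), h (xnorm x)
              = (B'.filter (fun x => xnorm x = r)).card • h r := by
            calc ∑ x ∈ B'.filter (fun x => xnorm x = r), h (xnorm x)
                = ∑ x ∈ B'.filter (fun x => xnorm x = r), h r :=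
                  Finset.sum_congr rfl (fun x hx => by rw [(Finset.mem_filter.1 hx).2])
              _ = _ := Finset.sum_const _
          rw [this, nsmul_eq_mul]
          have hcard := sphere_card hd (2^m + 1) r
          have : ((B'.filter (fun x => xnorm x = r)).card : ℝ) ≤ 8*((r:ℝ)+1) := by
            calc ((B'.filter (fun x => xnorm x = r)).card : ℝ) ≤ ((8*(r+1) : ℕ) : ℝ) := by
                  exact_mod_cast hcard
              _ = 8*((r:ℝ)+1) := by push_cast; ring
          nlinarith [hhnn r]
  have hstep3 : ∑ r ∈ Finset.range (2^m + 2), 8*((r:ℝ)+1) * h r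
      ≤ ∑ r ∈ Finset.range (2^m + 2), (320/(m:ℝ)^2) * (1/((r:ℝ)+1)) := by
    apply Finset.sum_le_sum
    intro r _
    have := term_le hm r
    rw [hh]
    have hmpos : (0:ℝ) < m := by exact_mod_cast hm
    have hrpos : (0:ℝ) < (r:ℝ)+1 := by positivity
    calc 8*((r:ℝ)+1) * (2 * (Dfun m (r - 1)^2 + Dfun m r^2))
        = 16 * (((r:ℝ)+1) * (Dfun m (r-1)^2 + Dfun m r^2)) := by ring
      _ ≤ 16 * (20/((m:ℝ)^2 * (r+1))) := by linarith
      _ = (320/(m:ℝ)^2) * (1/((r:ℝ)+1)) := by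
          field_simp
          ring
  have hstep4 : ∑ r ∈ Finset.range (2^m + 2), (320/(m:ℝ)^2) * (1/((r:ℝ)+1))
      ≤ 320 * ((m:ℝ)+3) / m^2 := by
    rw [← Finset.mul_sum]
    have hsub : Finset.range (2^m + 2) ⊆ Finset.range (2^(m+2)) := by
      apply Finset.range_subset_range.2
      have : 2^m + 2 ≤ 2^m + 2^m * 3 := by nlinarith [Nat.one_le_two_pow (n := m)]
      calc 2^m + 2 ≤ 4 * 2^m := by omega
        _ = 2^(m+2) := by ring
    have hH : ∑ r ∈ Finset.range (2^m + 2), (1:ℝ)/((r:ℝ)+1) ≤ (m:ℝ) + 3 := by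
      calc ∑ r ∈ Finset.range (2^m + 2), (1:ℝ)/((r:ℝ)+1)
          ≤ ∑ r ∈ Finset.range (2^(m+2)), (1:ℝ)/((r:ℝ)+1) :=
            Finset.sum_le_sum_of_subset_of_nonneg hsub (fun r _ _ => by positivity)
        _ ≤ (m+2:ℕ) + 1 := harmonic_le (m+2)
        _ = (m:ℝ) + 3 := by push_cast; ring
    have hmpos : (0:ℝ) < m := by exact_mod_cast hm
    calc (320/(m:ℝ)^2) * ∑ r ∈ Finset.range (2^m + 2), (1:ℝ)/((r:ℝ)+1)
        ≤ (320/(m:ℝ)^2) * ((m:ℝ)+3) := by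
          apply mul_le_mul_of_nonneg_left hH (by positivity)
      _ = 320 * ((m:ℝ)+3) / m^2 := by ring
  calc ∑ x ∈ T, g x ≤ ∑ x ∈ B', g x := hstep1
    _ ≤ _ := hstep2
    _ ≤ _ := hstep3
    _ ≤ _ := hstep4

lemma cutoff_exists {d : ℕ} (hd : d = 1 ∨ d = 2) {ε : ℝ} (hε : 0 < ε) :
    ∃ (φ : Zd d → ℝ) (S : Finset (Zd d)), φ 0 = 1 ∧ (∀ x ∉ S, φ x = 0) ∧
      ∀ T : Finset (Zd d), ∑ x ∈ T, ∑ l, (φ (x + zbasis l) - φ x)^2 ≤ ε := by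
  obtain ⟨m0, hm0⟩ := exists_nat_ge (1280/ε)
  set m : ℕ := m0 + 1 with hmdef
  have hm1 : 1 ≤ m := by omega
  have hmR : 1280/ε ≤ (m:ℝ) := by
    calc 1280/ε ≤ (m0:ℝ) := hm0
      _ ≤ m := by rw [hmdef]; push_cast; linarith
  have hmpos : (0:ℝ) < m := by positivity
  have hεm : 320 * ((m:ℝ)+3) / m^2 ≤ ε := by
    have h1 : (m:ℝ) + 3 ≤ 4 * m := by
      have : (1:ℝ) ≤ m := by exact_mod_cast hm1
      linarith
    have h2 : 320 * ((m:ℝ)+3) / m^2 ≤ 1280 / m := by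
      rw [div_le_div_iff₀ (by positivity) (by positivity)]
      have : (m:ℝ)^2 = m * m := by ring
      nlinarith
    have h3 : 1280 / (m:ℝ) ≤ ε := by
      rw [div_le_iff₀ hmpos]
      rw [div_le_iff₀ hε] at hmR
      linarith
    linarith
  refine ⟨phi d m, Box d (2^m), ?_, ?_, ?_⟩
  · unfold phi
    rw [xnorm_zero]
    exact ffun_zero m hm1
  · intro x hx
    rw [mem_Box] at hx
    exact phi_zero_of_far (by omega)
  · intro T
    exact le_trans (energy_le hd hm1 T) hεm


lemma abs_le_of_pow_le {x y : ℝ} (hy : 0 ≤ y) {k : ℕ} (hk : k ≠ 0) (h : |x|^k ≤ y^k) :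
    |x| ≤ y := by
  by_contra hc
  push_neg at hc
  have := pow_lt_pow_left₀ hc hy hk
  linarith

end S11

namespace S11

variable {d : ℕ}

lemma summable_shift_sq {u : Zd d → ℝ} (hu2 : Summable fun x => u x ^ 2) (v : Zd d) :
    Summable fun x => u (x + v) ^ 2 :=
  hu2.comp_injective (add_left_injective v)

lemma tsum_shift_sq (u : Zd d → ℝ) (v : Zd d) :
    ∑' x, u (x + v) ^ 2 = ∑' x, u x ^ 2 :=
  (Equiv.addRight v).tsum_eq (fun x => u x ^ 2)

lemma summable_mul_shift {u : Zd d → ℝ} (hu2 : Summable fun x => u x ^ 2) (v : Zd d) :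
    Summable fun x => u (x + v) * u x := by
  rw [← summable_abs_iff]
  apply Summable.of_nonneg_of_le (fun x => abs_nonneg _)
    (fun x => ?_) (((summable_shift_sq hu2 v).add hu2).mul_left (1/2 : ℝ))
  rw [abs_mul]
  nlinarith [sq_nonneg (|u (x + v)| - |u x|), sq_abs (u (x+v)), sq_abs (u x),
    abs_nonneg (u (x+v)), abs_nonneg (u x)]

lemma tsum_mul_shift_le {u : Zd d → ℝ} (hu2 : Summable fun x => u x ^ 2) (v : Zd d) :
    ∑' x, u (x + v) * u x ≤ ∑' x, u x ^ 2 := by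
  have h1 : ∑' x, u (x + v) * u x ≤ ∑' x, (1/2) * (u (x + v) ^ 2 + u x ^ 2) := by
    apply Summable.tsum_le_tsum _ (summable_mul_shift hu2 v)
      (((summable_shift_sq hu2 v).add hu2).mul_left (1/2 : ℝ))
    intro x
    nlinarith [sq_nonneg (u (x + v) - u x)]
  calc ∑' x, u (x + v) * u x ≤ ∑' x, (1/2) * (u (x + v) ^ 2 + u x ^ 2) := h1
    _ = (1/2) * (∑' x, u (x+v) ^2 + ∑' x, u x ^2) := by
        rw [tsum_mul_left, Summable.tsum_add (summable_shift_sq hu2 v) hu2]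
    _ = ∑' x, u x ^ 2 := by rw [tsum_shift_sq u v]; ring

lemma tsum_ddelta_mul (w : Zd d → ℝ) : ∑' x, ddelta x * w x = w 0 := by
  classical
  rw [tsum_eq_sum (s := {(0 : Zd d)}) (by
    intro b hb
    simp only [Finset.mem_singleton] at hb
    simp [ddelta, hb])]
  simp [ddelta]

/-- Pairing the equation with `u` itself gives `μ ‖u‖² ≤ u 0`. -/
lemma step1 {μ : ℝ} (u : Zd d → ℝ) (hu2 : Summable fun x => u x ^ 2)
    (heq : ∀ x, μ * u x - discLap u x = ddelta x) :
    μ * ∑' x, u x ^ 2 ≤ u 0 := by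
  classical
  have hsub : ∀ (l : Fin d) (x : Zd d), x - zbasis l = x + (-zbasis l) := by
    intro l x; abel
  have hsummand : ∀ x, ddelta x * u x
      = μ * u x ^ 2 + ∑ l, ((u x ^ 2 - u (x + zbasis l) * u x)
        + (u x ^ 2 - u (x + (-zbasis l)) * u x)) := by
    intro x
    rw [← heq x]
    unfold discLap
    rw [sub_mul, Finset.sum_mul]
    have : ∀ l : Fin d, ((u x ^ 2 - u (x + zbasis l) * u x)
        + (u x ^ 2 - u (x + (-zbasis l)) * u x))
        = -((u (x + zbasis l) + u (x - zbasis l) - 2 * u x) * u x) := by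
      intro l; rw [hsub]; ring
    rw [Finset.sum_congr rfl (fun l _ => this l), Finset.sum_neg_distrib]
    ring
  have hsl : ∀ v : Zd d, Summable (fun x => u x ^ 2 - u (x + v) * u x) :=
    fun v => hu2.sub (summable_mul_shift hu2 v)
  have hterm : ∀ l : Fin d, Summable (fun x => (u x ^ 2 - u (x + zbasis l) * u x)
      + (u x ^ 2 - u (x + (-zbasis l)) * u x)) :=
    fun l => (hsl _).add (hsl _)
  have htsum : u 0 = μ * (∑' x, u x ^ 2)
      + ∑ l, ((∑' x, (u x ^ 2 - u (x + zbasis l) * u x))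
        + ∑' x, (u x ^ 2 - u (x + (-zbasis l)) * u x)) := by
    rw [← tsum_ddelta_mul u, tsum_congr hsummand,
      Summable.tsum_add (hu2.mul_left μ) (summable_sum (fun l _ => hterm l)),
      tsum_mul_left, Summable.tsum_finsetSum (fun l _ => hterm l)]
    congr 1
    exact Finset.sum_congr rfl (fun l _ => Summable.tsum_add (hsl _) (hsl _))
  have hpos : ∀ v : Zd d, 0 ≤ ∑' x, (u x ^ 2 - u (x + v) * u x) := by
    intro v
    rw [Summable.tsum_sub hu2 (summable_mul_shift hu2 v)]
    have := tsum_mul_shift_le hu2 v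
    linarith
  have : 0 ≤ ∑ l : Fin d, ((∑' x, (u x ^ 2 - u (x + zbasis l) * u x))
      + ∑' x, (u x ^ 2 - u (x + (-zbasis l)) * u x)) :=
    Finset.sum_nonneg (fun l _ => add_nonneg (hpos _) (hpos _))
  linarith [htsum]

end S11

namespace Sob

variable {n : ℕ}

lemma cons_add (k : ℤ) (y : Fin n → ℤ) :
    (Fin.cons k y : Zd (n+1)) + zbasis 0 = Fin.cons (k+1) y := by
  funext i
  refine Fin.cases ?_ ?_ i
  · simp [Pi.add_apply, zbasis, Fin.cons_zero]
  · intro j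
    simp [Pi.add_apply, zbasis, Fin.cons_succ, Pi.single_eq_of_ne (Fin.succ_ne_zero j)]

lemma cons_zero_zero : (Fin.cons (0:ℤ) (0 : Fin n → ℤ)) = (0 : Zd (n+1)) := by
  funext i
  refine Fin.cases ?_ ?_ i
  · simp
  · intro j; simp

lemma sobolev (u : Zd (n+1) → ℝ) (hu2 : Summable fun x => u x ^ 2)
    {ε : ℝ} (hε : 0 < ε) :
    2 * ε * (u 0)^2 ≤ (∑' x, (u (x + zbasis 0) - u x)^2) + 4 * ε^2 * ∑' x, u x ^ 2 := by
  classical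
  set e₁ : Zd (n+1) := zbasis 0 with he₁
  set W : Zd (n+1) → ℝ := fun x => |u (x + e₁) ^ 2 - u x ^ 2| with hW
  set Nu := ∑' x, u x ^ 2 with hNu
  set E1 := ∑' x, (u (x + e₁) - u x)^2 with hE1
  have hE1sum : Summable fun x => (u (x + e₁) - u x)^2 := by
    apply Summable.of_nonneg_of_le (fun x => sq_nonneg _) (fun x => ?_)
      (((S11.summable_shift_sq hu2 e₁).add hu2).mul_left 2)
    nlinarith [sq_nonneg (u (x + e₁) + u x)]
  have hWpt : ∀ x, 2 * ε * W x ≤ (u (x + e₁) - u x)^2 + 2 * ε^2 * (u (x + e₁)^2 + u x ^2) := by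
    intro x
    set a := u (x + e₁); set b := u x
    have habs : W x = |a + b| * |a - b| := by
      show |a^2 - b^2| = _
      rw [← abs_mul]; ring_nf
    rw [habs]
    nlinarith [sq_nonneg (ε * |a+b| - |a-b|), sq_abs (a+b), sq_abs (a-b),
      sq_nonneg (a - b), sq_nonneg (a + b), abs_nonneg (a+b), abs_nonneg (a-b), hε]
  have hM : Summable (fun x => (u (x + e₁) - u x)^2 + 2 * ε^2 * (u (x + e₁)^2 + u x ^2)) :=
    hE1sum.add (((S11.summable_shift_sq hu2 e₁).add hu2).mul_left (2*ε^2))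
  have hWsum : Summable W := by
    apply Summable.of_nonneg_of_le (fun x => abs_nonneg _) (fun x => ?_)
      (hM.mul_left (1/(2*ε)))
    have := hWpt x
    rw [one_div, inv_mul_eq_div, le_div_iff₀ (by positivity)]
    linarith [this]
  set Htot := ∑' x, W x with hHtot
  have h2eH : 2 * ε * Htot ≤ E1 + 4 * ε^2 * Nu := by
    have h1 : 2 * ε * Htot = ∑' x, (2 * ε * W x) := (tsum_mul_left).symm
    have h2 : ∑' x, (2 * ε * W x) ≤ ∑' x, ((u (x + e₁) - u x)^2 + 2 * ε^2 * (u (x + e₁)^2 + u x ^2)) :=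
      Summable.tsum_le_tsum hWpt (hWsum.mul_left _) hM
    have h3 : ∑' x, ((u (x + e₁) - u x)^2 + 2 * ε^2 * (u (x + e₁)^2 + u x ^2))
        = E1 + 2 * ε^2 * (∑' x, u (x+e₁)^2 + ∑' x, u x ^2) := by
      rw [Summable.tsum_add hE1sum (((S11.summable_shift_sq hu2 e₁).add hu2).mul_left (2*ε^2)),
        tsum_mul_left, Summable.tsum_add (S11.summable_shift_sq hu2 e₁) hu2]
    rw [S11.tsum_shift_sq u e₁] at h3
    rw [h1]
    calc ∑' x, (2 * ε * W x) ≤ _ := h2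
      _ = E1 + 2 * ε^2 * (Nu + Nu) := h3
      _ = E1 + 4 * ε^2 * Nu := by ring
  -- slicing
  have hsli : ∀ k : ℤ, Summable fun y : Fin n → ℤ => u (Fin.cons k y) ^ 2 :=
    fun k => hu2.comp_injective (Fin.cons_right_injective (α := fun _ : Fin (n+1) => ℤ) k)
  have hWsli : ∀ k : ℤ, Summable fun y : Fin n → ℤ => W (Fin.cons k y) :=
    fun k => hWsum.comp_injective (Fin.cons_right_injective (α := fun _ : Fin (n+1) => ℤ) k)
  set f : ℤ → ℝ := fun k => ∑' y : Fin n → ℤ, u (Fin.cons k y) ^ 2 with hf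
  set h : ℤ → ℝ := fun k => ∑' y : Fin n → ℤ, W (Fin.cons k y) with hh
  have eqv : (ℤ × (Fin n → ℤ)) ≃ Zd (n+1) := Fin.consEquiv (fun _ : Fin (n+1) => ℤ)
  have hfhasSum : HasSum f Nu := by
    have h1 : HasSum ((fun x => u x ^ 2) ∘ (Fin.consEquiv (fun _ : Fin (n+1) => ℤ))) Nu :=
      (Equiv.hasSum_iff _).2 hu2.hasSum
    exact h1.prod_fiberwise (fun k => (hsli k).hasSum)
  have hhhasSum : HasSum h Htot := by
    have h1 : HasSum (W ∘ (Fin.consEquiv (fun _ : Fin (n+1) => ℤ))) Htot :=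
      (Equiv.hasSum_iff _).2 hWsum.hasSum
    exact h1.prod_fiberwise (fun k => (hWsli k).hasSum)
  have hfdiff : ∀ k : ℤ, f k - f (k+1) ≤ h k := by
    intro k
    have hshift : f (k+1) = ∑' y : Fin n → ℤ, u (Fin.cons k y + e₁) ^ 2 := by
      exact tsum_congr fun y => by rw [he₁, cons_add]
    have hsli' : Summable fun y : Fin n → ℤ => u (Fin.cons k y + e₁) ^ 2 := by
      have := hsli (k+1)
      apply this.congr
      intro y; rw [he₁, cons_add]
    rw [hshift, ← Summable.tsum_sub (hsli k) hsli']
    apply Summable.tsum_le_tsum _ ((hsli k).sub hsli') (hWsli k)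
    intro y
    have := le_abs_self (u (Fin.cons k y) ^ 2 - u (Fin.cons k y + e₁) ^ 2)
    rw [abs_sub_comm] at this
    exact this
  set F : ℕ → ℝ := fun j => f (j:ℤ) with hF
  have hFsum : Summable F := hfhasSum.summable.comp_injective Nat.cast_injective
  have hF0 : Tendsto F atTop (nhds 0) := hFsum.tendsto_atTop_zero
  have htel : ∀ N : ℕ, f 0 - F N ≤ Htot := by
    intro N
    have h1 : f 0 - F N = ∑ j ∈ Finset.range N, (F j - F (j+1)) :=
      (Finset.sum_range_sub' F N).symm
    have h2 : ∀ j : ℕ, F j - F (j+1) ≤ h (j:ℤ) := by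
      intro j
      have := hfdiff (j:ℤ)
      have hc : ((j:ℤ) + 1) = ((j+1 : ℕ) : ℤ) := by push_cast; ring
      rw [hc] at this
      exact this
    have h4 : ∑ j ∈ Finset.range N, h (j:ℤ) ≤ Htot := by
      have := sum_le_hasSum ((Finset.range N).map ⟨(Nat.cast : ℕ → ℤ), Nat.cast_injective⟩)
        (fun k _ => tsum_nonneg fun y => abs_nonneg _) hhhasSum
      rw [Finset.sum_map] at this
      exact this
    calc f 0 - F N = ∑ j ∈ Finset.range N, (F j - F (j+1)) := h1
      _ ≤ ∑ j ∈ Finset.range N, h (j:ℤ) := Finset.sum_le_sum fun j _ => h2 j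
      _ ≤ Htot := h4
  have hf0le : f 0 ≤ Htot := by
    have hT : Tendsto (fun N => f 0 - F N) atTop (nhds (f 0 - 0)) :=
      tendsto_const_nhds.sub hF0
    have := le_of_tendsto hT (Filter.Eventually.of_forall htel)
    simpa using this
  have hu0 : (u 0)^2 ≤ f 0 := by
    have hz : u (Fin.cons (0:ℤ) (0 : Fin n → ℤ)) ^ 2 = (u 0)^2 := by
      rw [cons_zero_zero]
    calc (u 0)^2 = u (Fin.cons (0:ℤ) (0 : Fin n → ℤ)) ^ 2 := hz.symm
      _ ≤ f 0 := Summable.le_tsum (hsli 0) (0 : Fin n → ℤ) (fun y _ => sq_nonneg _)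
  have hftot : f 0 ≤ Htot := hf0le
  nlinarith [hu0, hftot, h2eH, hε]

end Sob


/-- In dimensions `d ∈ {1,2}`, the gradients `∂G_μ` of the massive
Green's functions are not bounded in `ℓ²(ℤ^d, ℝ^d)` uniformly over `μ ∈ (0,1]`:
`sup_{0<μ≤1} ∑_y |∂G_μ(y)|² = ∞`. -/
theorem statement11 (d : ℕ) (hd : d = 1 ∨ d = 2) (G : ℝ → Zd d → ℝ)
    (hG : ∀ μ : ℝ, 0 < μ → (Summable fun x => (G μ x) ^ 2) ∧
      ∀ x : Zd d, μ * G μ x - discLap (G μ) x = ddelta x) :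
    (⨆ (μ : ℝ) (_ : μ ∈ Set.Ioc (0 : ℝ) 1),
      ∑' y : Zd d, ENNReal.ofReal (∑ l, (G μ (y + zbasis l) - G μ y) ^ 2)) = ⊤ := by
  classical
  by_contra hB
  set C : ℝ := (⨆ (μ : ℝ) (_ : μ ∈ Set.Ioc (0 : ℝ) 1),
      ∑' y : Zd d, ENNReal.ofReal (∑ l, (G μ (y + zbasis l) - G μ y) ^ 2)).toReal with hCdef
  have hC0 : 0 ≤ C := ENNReal.toReal_nonneg
  have hfin : ∀ μ, μ ∈ Set.Ioc (0:ℝ) 1 → ∀ T : Finset (Zd d),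
      ∑ y ∈ T, ∑ l, (G μ (y + zbasis l) - G μ y)^2 ≤ C := by
    intro μ hμ T
    have h1 : (∑' y : Zd d, ENNReal.ofReal (∑ l, (G μ (y + zbasis l) - G μ y)^2))
        ≤ ⨆ (μ : ℝ) (_ : μ ∈ Set.Ioc (0 : ℝ) 1),
          ∑' y : Zd d, ENNReal.ofReal (∑ l, (G μ (y + zbasis l) - G μ y) ^ 2) :=
      le_iSup₂ (f := fun (μ : ℝ) (_ : μ ∈ Set.Ioc (0:ℝ) 1) =>
        ∑' y : Zd d, ENNReal.ofReal (∑ l, (G μ (y + zbasis l) - G μ y) ^ 2)) μ hμ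
    have h2 : ∑ y ∈ T, ENNReal.ofReal (∑ l, (G μ (y + zbasis l) - G μ y)^2)
        ≤ ∑' y : Zd d, ENNReal.ofReal (∑ l, (G μ (y + zbasis l) - G μ y)^2) :=
      Summable.sum_le_tsum T (fun _ _ => zero_le) ENNReal.summable
    have h3 : ENNReal.ofReal (∑ y ∈ T, ∑ l, (G μ (y + zbasis l) - G μ y)^2)
        ≤ ⨆ (μ : ℝ) (_ : μ ∈ Set.Ioc (0 : ℝ) 1),
          ∑' y : Zd d, ENNReal.ofReal (∑ l, (G μ (y + zbasis l) - G μ y) ^ 2) := by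
      rw [ENNReal.ofReal_sum_of_nonneg (fun y _ => Finset.sum_nonneg (fun l _ => sq_nonneg _))]
      exact le_trans h2 h1
    exact (ENNReal.ofReal_le_iff_le_toReal hB).1 h3
  obtain ⟨n, rfl⟩ : ∃ n, d = n + 1 := by rcases hd with h | h <;> exact ⟨d - 1, by omega⟩
  -- cutoff
  have hεcut : (0:ℝ) < 1/(16*(C+1)) := by positivity
  obtain ⟨φ, S, hφ0, hφS, hφen⟩ := S11.cutoff_exists hd hεcut
  set S' : Finset (Zd (n+1)) :=
    S ∪ Finset.univ.biUnion (fun l : Fin (n+1) => S.image (fun x => x - zbasis l)) with hS'def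
  have hsupp : ∀ x ∉ S', φ x = 0 := fun x hx =>
    hφS x (fun hxs => hx (Finset.mem_union_left _ hxs))
  have hsupp' : ∀ x ∉ S', ∀ l, φ (x + zbasis l) = 0 := by
    intro x hx l
    by_contra hne
    have hxS : x + zbasis l ∈ S := by
      by_contra h; exact hne (hφS _ h)
    apply hx
    apply Finset.mem_union_right
    exact Finset.mem_biUnion.2 ⟨l, Finset.mem_univ l,
      Finset.mem_image.2 ⟨x + zbasis l, hxS, by abel⟩⟩
  set Sφ : ℝ := ∑ x ∈ S, φ x ^ 2 with hSφdef
  have hSφ0 : 0 ≤ Sφ := Finset.sum_nonneg fun x _ => sq_nonneg _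
  set A : ℝ := (6*C+1)*(Sφ+1)^3 with hAdef
  have hA1 : 1 ≤ A := by
    have h1 : (1:ℝ) ≤ (Sφ+1)^3 := by
      have := pow_le_pow_left₀ (by norm_num : (0:ℝ) ≤ 1) (by linarith : (1:ℝ) ≤ Sφ+1) 3
      simpa using this
    nlinarith [hC0]
  set δ : ℝ := 1/(4096*A + 1) with hδdef
  have hδpos : 0 < δ := by positivity
  set μ : ℝ := min 1 δ with hμdef
  have hμpos : 0 < μ := lt_min one_pos hδpos
  have hμ1 : μ ≤ 1 := min_le_left _ _
  have hμδ : μ ≤ δ := min_le_right _ _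
  have hμIoc : μ ∈ Set.Ioc (0:ℝ) 1 := ⟨hμpos, hμ1⟩
  obtain ⟨hu2, heq⟩ := hG μ hμpos
  set u : Zd (n+1) → ℝ := G μ with hudef
  set Nu : ℝ := ∑' x, u x ^ 2 with hNudef
  have hNu0 : 0 ≤ Nu := tsum_nonneg fun x => sq_nonneg _
  -- E1 ≤ C
  have hE1sum : Summable fun x => (u (x + zbasis 0) - u x)^2 := by
    apply Summable.of_nonneg_of_le (fun x => sq_nonneg _) (fun x => ?_)
      (((S11.summable_shift_sq hu2 (zbasis 0)).add hu2).mul_left 2)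
    nlinarith [sq_nonneg (u (x + zbasis 0) + u x)]
  have hE1C : ∑' x, (u (x + zbasis 0) - u x)^2 ≤ C := by
    apply Summable.tsum_le_of_sum_le hE1sum
    intro T
    calc ∑ y ∈ T, (u (y + zbasis 0) - u y)^2
        ≤ ∑ y ∈ T, ∑ l, (u (y + zbasis l) - u y)^2 :=
          Finset.sum_le_sum fun y _ => Finset.single_le_sum
            (f := fun l => (u (y + zbasis l) - u y)^2) (fun l _ => sq_nonneg _)
            (Finset.mem_univ 0)
      _ ≤ C := hfin μ hμIoc T
  -- key polynomial bound
  have hkey : μ^4 * Nu^3 ≤ 6 * C := by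
    rcases eq_or_lt_of_le hNu0 with h0 | hNupos
    · rw [← h0]
      simpa using by positivity
    · have hεpos : (0:ℝ) < μ^2 * Nu / 8 := by positivity
      have hsob := Sob.sobolev u hu2 hεpos
      have h1 : μ * Nu ≤ u 0 := S11.step1 u hu2 heq
      have hu0nn : 0 ≤ u 0 := le_trans (by positivity) h1
      have hsq : (μ * Nu)^2 ≤ (u 0)^2 := pow_le_pow_left₀ (by positivity) h1 2
      nlinarith [hsob, hE1C, hsq, hεpos, hNupos, hμpos, mul_le_mul_of_nonneg_left hsq (le_of_lt hεpos)]
  -- summability of finitely supported products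
  have hsum_gen : ∀ (c : Zd (n+1) → ℝ), Summable (fun x => c x * φ x) := fun c =>
    summable_of_ne_finset_zero (s := S) (fun x hx => by rw [hφS x hx, mul_zero])
  have hsum_shiftφ : ∀ (c : Zd (n+1) → ℝ) (l : Fin (n+1)),
      Summable (fun x => c x * φ (x + zbasis l)) := fun c l =>
    summable_of_ne_finset_zero (s := S') (fun x hx => by rw [hsupp' x hx l, mul_zero])
  -- the identity
  set T1 : ℝ := ∑' x, u x * φ x with hT1def
  have hAl : ∀ l : Fin (n+1),
      (∑' x, (u x * φ x - u (x + zbasis l) * φ x))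
        + (∑' x, (u x * φ x - u (x + (-zbasis l)) * φ x))
      = ∑' x, (u (x + zbasis l) - u x) * (φ (x + zbasis l) - φ x) := by
    intro l
    have hg1 : ∑' x, u (x + zbasis l) * φ (x + zbasis l) = ∑' x, u x * φ x :=
      (Equiv.addRight (zbasis l)).tsum_eq (fun x => u x * φ x)
    have hg3 : ∑' x, u x * φ (x + zbasis l) = ∑' x, u (x + (-zbasis l)) * φ x := by
      have h := (Equiv.addRight (zbasis l)).tsum_eq (fun y => u (y + (-zbasis l)) * φ y)
      simp only [Equiv.coe_addRight, add_neg_cancel_right] at h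
      exact h
    have s1 : Summable fun x => u (x + zbasis l) * φ (x + zbasis l) :=
      hsum_shiftφ (fun x => u (x + zbasis l)) l
    have s2 : Summable fun x => u (x + zbasis l) * φ x := hsum_gen _
    have s3 : Summable fun x => u x * φ (x + zbasis l) := hsum_shiftφ u l
    have s4 : Summable fun x => u x * φ x := hsum_gen u
    have s5 : Summable fun x => u (x + (-zbasis l)) * φ x := hsum_gen _
    have hrhs : ∑' x, (u (x + zbasis l) - u x) * (φ (x + zbasis l) - φ x)
        = (∑' x, (u (x + zbasis l) * φ (x + zbasis l) - u (x + zbasis l) * φ x))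
          - ∑' x, (u x * φ (x + zbasis l) - u x * φ x) := by
      rw [← Summable.tsum_sub (s1.sub s2) (s3.sub s4)]
      exact tsum_congr fun x => by ring
    rw [hrhs, Summable.tsum_sub s1 s2, Summable.tsum_sub s3 s4, Summable.tsum_sub s4 s2, Summable.tsum_sub s4 s5, hg1, hg3]
    ring
  have hid : (1:ℝ) = μ * T1
      + ∑ l, ∑' x, (u (x + zbasis l) - u x) * (φ (x + zbasis l) - φ x) := by
    have hsummand : ∀ x, ddelta x * φ x
        = μ * (u x * φ x) + ∑ l, ((u x * φ x - u (x + zbasis l) * φ x)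
          + (u x * φ x - u (x + (-zbasis l)) * φ x)) := by
      intro x
      rw [← heq x]
      unfold discLap
      rw [sub_mul, Finset.sum_mul]
      have : ∀ l : Fin (n+1), ((u x * φ x - u (x + zbasis l) * φ x)
          + (u x * φ x - u (x + (-zbasis l)) * φ x))
          = -((u (x + zbasis l) + u (x - zbasis l) - 2 * u x) * φ x) := by
        intro l
        rw [show x - zbasis l = x + (-zbasis l) by abel]
        ring
      rw [Finset.sum_congr rfl (fun l _ => this l), Finset.sum_neg_distrib]
      ring
    have hterm : ∀ l : Fin (n+1), Summable (fun x => (u x * φ x - u (x + zbasis l) * φ x)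
        + (u x * φ x - u (x + (-zbasis l)) * φ x)) := fun l =>
      ((hsum_gen u).sub (hsum_gen _)).add ((hsum_gen u).sub (hsum_gen _))
    calc (1:ℝ) = φ 0 := hφ0.symm
      _ = ∑' x, ddelta x * φ x := (S11.tsum_ddelta_mul φ).symm
      _ = ∑' x, (μ * (u x * φ x) + ∑ l, ((u x * φ x - u (x + zbasis l) * φ x)
          + (u x * φ x - u (x + (-zbasis l)) * φ x))) := tsum_congr hsummand
      _ = μ * T1 + ∑ l, ((∑' x, (u x * φ x - u (x + zbasis l) * φ x))
          + ∑' x, (u x * φ x - u (x + (-zbasis l)) * φ x)) := by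
          rw [Summable.tsum_add ((hsum_gen u).mul_left μ) (summable_sum (fun l _ => hterm l)),
            tsum_mul_left, Summable.tsum_finsetSum (fun l _ => hterm l)]
          congr 1
          exact Finset.sum_congr rfl (fun l _ =>
            Summable.tsum_add ((hsum_gen u).sub (hsum_gen _)) ((hsum_gen u).sub (hsum_gen _)))
      _ = μ * T1 + ∑ l, ∑' x, (u (x + zbasis l) - u x) * (φ (x + zbasis l) - φ x) := by
          rw [Finset.sum_congr rfl (fun l _ => hAl l)]
  -- bounds on the two terms
  set P : ℝ := ∑ l, ∑' x, (u (x + zbasis l) - u x) * (φ (x + zbasis l) - φ x) with hPdef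
  have hPfin : P = ∑ x ∈ S', ∑ l, (u (x + zbasis l) - u x) * (φ (x + zbasis l) - φ x) := by
    rw [hPdef, Finset.sum_comm]
    apply Finset.sum_congr rfl
    intro l _
    apply tsum_eq_sum
    intro x hx
    rw [hsupp x hx, hsupp' x hx l]
    ring
  have hP2 : P^2 ≤ C * (1/(16*(C+1))) := by
    have hcs := Finset.sum_mul_sq_le_sq_mul_sq (S' ×ˢ Finset.univ)
      (fun p : Zd (n+1) × Fin (n+1) => u (p.1 + zbasis p.2) - u p.1)
      (fun p : Zd (n+1) × Fin (n+1) => φ (p.1 + zbasis p.2) - φ p.1)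
    rw [Finset.sum_product, Finset.sum_product, Finset.sum_product] at hcs
    rw [hPfin]
    calc (∑ x ∈ S', ∑ l, (u (x + zbasis l) - u x) * (φ (x + zbasis l) - φ x))^2
        ≤ (∑ x ∈ S', ∑ l, (u (x + zbasis l) - u x)^2)
          * (∑ x ∈ S', ∑ l, (φ (x + zbasis l) - φ x)^2) := hcs
      _ ≤ C * (1/(16*(C+1))) := by
          apply mul_le_mul (hfin μ hμIoc S') (hφen S')
            (Finset.sum_nonneg fun x _ => Finset.sum_nonneg fun l _ => sq_nonneg _) hC0
  have hPle : |P| ≤ 1/4 := by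
    have h1 : P^2 ≤ 1/16 := by
      calc P^2 ≤ C * (1/(16*(C+1))) := hP2
        _ ≤ 1/16 := by
            rw [mul_one_div, div_le_div_iff₀ (by positivity) (by norm_num)]
            linarith
    nlinarith [sq_abs P, abs_nonneg P]
  have hT1fin : T1 = ∑ x ∈ S, u x * φ x := by
    rw [hT1def]
    apply tsum_eq_sum
    intro x hx
    rw [hφS x hx, mul_zero]
  have hT1sq : T1^2 ≤ Nu * Sφ := by
    rw [hT1fin]
    have hcs := Finset.sum_mul_sq_le_sq_mul_sq S u φ
    have hle : ∑ x ∈ S, u x ^ 2 ≤ Nu := Summable.sum_le_tsum S (fun x _ => sq_nonneg _) hu2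
    calc (∑ x ∈ S, u x * φ x)^2 ≤ (∑ x ∈ S, u x ^2) * (∑ x ∈ S, φ x ^2) := hcs
      _ ≤ Nu * Sφ := by
          apply mul_le_mul hle le_rfl (Finset.sum_nonneg fun x _ => sq_nonneg _)
            (le_trans (Finset.sum_nonneg fun x _ => sq_nonneg _) hle)
  have hμT1 : |μ * T1| ≤ 1/4 := by
    apply S11.abs_le_of_pow_le (by norm_num) (k := 6) (by norm_num)
    have habs : |μ * T1|^6 = ((μ * T1)^2)^3 := by
      rw [← abs_pow]
      rw [show ((μ*T1)^6) = ((μ*T1)^2)^3 by ring]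
      exact abs_of_nonneg (by positivity)
    rw [habs]
    have h1 : (μ * T1)^2 ≤ μ^2 * Nu * Sφ := by
      calc (μ * T1)^2 = μ^2 * T1^2 := by ring
        _ ≤ μ^2 * (Nu * Sφ) := mul_le_mul_of_nonneg_left hT1sq (sq_nonneg μ)
        _ = μ^2 * Nu * Sφ := by ring
    have h2 : ((μ*T1)^2)^3 ≤ (μ^2 * Nu * Sφ)^3 := by
      apply pow_le_pow_left₀ (sq_nonneg _) h1
    have h3 : (μ^2 * Nu * Sφ)^3 = (μ^2)^3 * Nu^3 * Sφ^3 := by ring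
    have h4 : (μ^2)^3 * Nu^3 = μ^2 * (μ^4 * Nu^3) := by ring
    have h5 : (μ^2 * Nu * Sφ)^3 ≤ μ^2 * (6*C) * Sφ^3 := by
      rw [h3]
      have hkk : (μ^2)^3 * Nu^3 ≤ μ^2 * (6*C) := by
        rw [h4]
        exact mul_le_mul_of_nonneg_left hkey (le_of_lt (by positivity : (0:ℝ) < μ^2))
      exact mul_le_mul_of_nonneg_right hkk (pow_nonneg hSφ0 3)
    have h6 : μ^2 * (6*C) * Sφ^3 ≤ (1/4)^6 := by
      have hμ2δ : μ^2 ≤ δ := by nlinarith [hμδ, hμ1, hμpos, hδpos]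
      have hbound : δ * A ≤ 1/4096 := by
        rw [hδdef, div_mul_eq_mul_div, div_le_div_iff₀ (by positivity) (by norm_num)]
        linarith
      have e1 : (6*C) * Sφ^3 ≤ A := by
        rw [hAdef]
        have hc : Sφ^3 ≤ (Sφ+1)^3 := pow_le_pow_left₀ hSφ0 (by linarith) 3
        have := mul_le_mul (by linarith : 6*C ≤ 6*C+1) hc (pow_nonneg hSφ0 3) (by linarith)
        linarith
      have e2 : 0 ≤ (6*C) * Sφ^3 := by positivity
      have hmono : μ^2 * ((6*C) * Sφ^3) ≤ δ * A :=
        mul_le_mul hμ2δ e1 e2 (le_of_lt hδpos)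
      calc μ^2 * (6*C) * Sφ^3 = μ^2 * ((6*C) * Sφ^3) := by ring
        _ ≤ δ * A := hmono
        _ ≤ 1/4096 := hbound
        _ = (1/4)^6 := by norm_num
    linarith
  have habs1 : (1:ℝ) ≤ |μ * T1| + |P| := by
    calc (1:ℝ) = |μ * T1 + P| := by rw [← hid]; norm_num
      _ ≤ |μ * T1| + |P| := abs_add_le _ _
  linarith
end
end

section
/- Let $d > 2$ and $2 < \alpha < d$, and let $C_0 \ge 1$. Let $F : \mathbb{Z}^d \to [0,\infty)$ satisfy: (i) $F(y) \le C_0$ for all $y \in \mathbb{Z}^d$; and (ii) for every $p \in [1,\infty)$ and every integer $i \ge 1$: $\sum_{2^i < |y| \le 2^{i+1}} F(y)^p \le C_0\,(2^i)^d (2^i)^{p(1-d)}$. Then there exists a constant $C < \infty$ depending only on $d$, $\alpha$, and $C_0$ such that $\sum_{y \in \mathbb{Z}^d} \sum_{y' \in \mathbb{Z}^d} F(y)\,F(y')\,\frac{1}{1 + |y - y'|^\alpha} \le C$. -/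
open MeasureTheory Filter
open scoped ENNReal BigOperators

noncomputable section

variable {d : ℕ}

namespace Stmt12Aux

lemma castZ_sub (a b : Zd d) : castZ (a - b) = castZ a - castZ b := by
  ext i; simp [castZ]

lemma abs_coord_le (y : Zd d) (l : Fin d) : |(y l : ℝ)| ≤ ‖castZ y‖ := by
  have h := EuclideanSpace.norm_eq (castZ y)
  rw [h]
  have : |(y l : ℝ)| = Real.sqrt (‖castZ y l‖^2) := by
    rw [Real.sqrt_sq_eq_abs]; simp [castZ]
  rw [this]
  apply Real.sqrt_le_sqrt
  exact Finset.single_le_sum (f := fun i => ‖castZ y i‖^2) (fun i _ => sq_nonneg _) (Finset.mem_univ l)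

/-- Dyadic scale of a lattice point. -/
def scl (y : Zd d) : ℕ := Nat.clog 2 ⌈‖castZ y‖⌉₊ - 1

lemma norm_le_pow_scl (y : Zd d) : ‖castZ y‖ ≤ (2:ℝ) ^ (scl y + 1) := by
  have h1 : ‖castZ y‖ ≤ (⌈‖castZ y‖⌉₊ : ℝ) := Nat.le_ceil _
  have h2 : ⌈‖castZ y‖⌉₊ ≤ 2 ^ (scl y + 1) := by
    calc ⌈‖castZ y‖⌉₊ ≤ 2 ^ Nat.clog 2 ⌈‖castZ y‖⌉₊ := Nat.le_pow_clog one_lt_two _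
    _ ≤ 2 ^ (scl y + 1) := by
        apply Nat.pow_le_pow_right (by norm_num)
        unfold scl; omega
  calc ‖castZ y‖ ≤ (⌈‖castZ y‖⌉₊ : ℝ) := h1
  _ ≤ ((2 ^ (scl y + 1) : ℕ) : ℝ) := by exact_mod_cast h2
  _ = (2:ℝ) ^ (scl y + 1) := by push_cast; ring

lemma pow_scl_lt_norm (y : Zd d) (h : 1 ≤ scl y) : (2:ℝ) ^ scl y < ‖castZ y‖ := by
  have hc : 2 ≤ Nat.clog 2 ⌈‖castZ y‖⌉₊ := by unfold scl at h; omega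
  have hn : 1 < ⌈‖castZ y‖⌉₊ := by
    by_contra hh
    push_neg at hh
    interval_cases h' : ⌈‖castZ y‖⌉₊ <;> simp_all [Nat.clog]
  have := Nat.pow_pred_clog_lt_self (b := 2) one_lt_two hn
  have h2 : (2:ℕ) ^ (scl y) < ⌈‖castZ y‖⌉₊ := by
    unfold scl; exact this
  have := (Nat.lt_ceil).mp h2
  calc (2:ℝ) ^ scl y = ((2 ^ scl y : ℕ) : ℝ) := by push_cast; ring
  _ < ‖castZ y‖ := this

open Classical in
lemma count_scl (i : ℕ) :
    (∑' y : Zd d, (if scl y = i then (1:ℝ≥0∞) else 0)) ≤ 2 ^ ((i+3)*d) := by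
  classical
  set s : Finset (Zd d) := Fintype.piFinset (fun _ => Finset.Icc (-(2^(i+1):ℤ)) (2^(i+1))) with hs
  have hout : ∀ y : Zd d, y ∉ s → (if scl y = i then (1:ℝ≥0∞) else 0) = 0 := by
    intro y hy
    rw [if_neg]
    intro hsy
    apply hy
    rw [hs, Fintype.mem_piFinset]
    intro l
    rw [Finset.mem_Icc]
    have h1 : |(y l : ℝ)| ≤ (2:ℝ) ^ (i+1) := by
      calc |(y l : ℝ)| ≤ ‖castZ y‖ := abs_coord_le y l
      _ ≤ (2:ℝ) ^ (scl y + 1) := norm_le_pow_scl y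
      _ = (2:ℝ) ^ (i + 1) := by rw [hsy]
    have h2 : |y l| ≤ (2:ℤ)^(i+1) := by
      have : ((|y l| : ℤ) : ℝ) ≤ (((2:ℤ)^(i+1) : ℤ) : ℝ) := by push_cast; exact h1
      exact_mod_cast this
    constructor <;> [linarith [abs_le.mp h2]; linarith [abs_le.mp h2]]
  rw [tsum_eq_sum hout]
  calc (∑ y ∈ s, if scl y = i then (1:ℝ≥0∞) else 0) ≤ ∑ _y ∈ s, 1 := by
        apply Finset.sum_le_sum; intro y _; split <;> simp
  _ = (s.card : ℝ≥0∞) := by simp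
  _ ≤ ((2 ^ ((i+3)*d) : ℕ) : ℝ≥0∞) := by
      apply Nat.cast_le.mpr
      rw [hs, Fintype.card_piFinset]
      have hcard : ∀ l : Fin d, (Finset.Icc (-(2^(i+1):ℤ)) (2^(i+1))).card = 2^(i+2) + 1 := by
        intro l
        rw [Int.card_Icc]
        have : ((2:ℤ)^(i+1)) + 1 - (-(2^(i+1))) = ((2^(i+2)+1 : ℕ) : ℤ) := by push_cast; ring
        rw [this, Int.toNat_natCast]
      calc (∏ l : Fin d, (Finset.Icc (-(2^(i+1):ℤ)) (2^(i+1))).card)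
          = (2^(i+2)+1)^d := by rw [Finset.prod_congr rfl (fun l _ => hcard l)]; simp
      _ ≤ (2^(i+3))^d := Nat.pow_le_pow_left (by
          have h1 : (1:ℕ) ≤ 2^(i+2) := Nat.one_le_two_pow
          have h2 : (2:ℕ)^(i+3) = 2*2^(i+2) := by ring
          omega) d
      _ = 2 ^ ((i+3)*d) := by rw [← pow_mul]
  _ = 2 ^ ((i+3)*d) := by push_cast; ring

lemma Fbound (C₀ : ℝ) (hC₀ : 1 ≤ C₀) (F : Zd d → ℝ)
    (hF0 : ∀ y, 0 ≤ F y) (hFC : ∀ y, F y ≤ C₀)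
    (hyp : ∀ p : ℝ, 1 ≤ p → ∀ i : ℕ, 1 ≤ i →
        (∑' y : Zd d, (if (2:ℝ) ^ i < ‖castZ y‖ ∧ ‖castZ y‖ ≤ (2:ℝ) ^ (i+1)
            then ENNReal.ofReal (F y ^ p) else 0))
          ≤ ENNReal.ofReal (C₀ * ((2:ℝ) ^ i) ^ (d : ℝ) * ((2:ℝ) ^ i) ^ (p * (1 - (d : ℝ))))) :
    ∀ y, F y ≤ C₀ * (2:ℝ) ^ (d:ℝ) * (2:ℝ) ^ (-(scl y : ℝ) * ((d:ℝ) - 1)) := by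
  intro y
  have h2d : (1:ℝ) ≤ (2:ℝ) ^ (d:ℝ) := Real.one_le_rpow (by norm_num) (by positivity)
  rcases Nat.eq_zero_or_pos (scl y) with h0 | hpos
  · rw [h0]
    simp only [Nat.cast_zero, neg_zero, zero_mul, Real.rpow_zero, mul_one]
    calc F y ≤ C₀ := hFC y
    _ = C₀ * 1 := by ring
    _ ≤ C₀ * (2:ℝ) ^ (d:ℝ) := by
        apply mul_le_mul_of_nonneg_left h2d (by linarith)
  · set i := scl y with hi
    have hir : (1:ℝ) ≤ (i:ℝ) := by exact_mod_cast hpos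
    have hirpos : (0:ℝ) < (i:ℝ) := by linarith
    have key := hyp (i:ℝ) hir i hpos
    have hcond : (2:ℝ) ^ i < ‖castZ y‖ ∧ ‖castZ y‖ ≤ (2:ℝ) ^ (i+1) :=
      ⟨pow_scl_lt_norm y hpos, norm_le_pow_scl y⟩
    have hterm : ENNReal.ofReal (F y ^ (i:ℝ)) ≤
        ENNReal.ofReal (C₀ * ((2:ℝ) ^ i) ^ (d : ℝ) * ((2:ℝ) ^ i) ^ ((i:ℝ) * (1 - (d : ℝ)))) := by
      refine le_trans ?_ key
      have := ENNReal.le_tsum (f := fun y' : Zd d =>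
        (if (2:ℝ) ^ i < ‖castZ y'‖ ∧ ‖castZ y'‖ ≤ (2:ℝ) ^ (i+1)
            then ENNReal.ofReal (F y' ^ (i:ℝ)) else 0)) y
      simpa [if_pos hcond] using this
    have hRB : (0:ℝ) ≤ C₀ * ((2:ℝ) ^ i) ^ (d : ℝ) * ((2:ℝ) ^ i) ^ ((i:ℝ) * (1 - (d : ℝ))) := by
      positivity
    have hreal : F y ^ (i:ℝ) ≤
        C₀ * ((2:ℝ) ^ i) ^ (d : ℝ) * ((2:ℝ) ^ i) ^ ((i:ℝ) * (1 - (d : ℝ))) :=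
      (ENNReal.ofReal_le_ofReal_iff hRB).mp hterm
    have hFy : F y = (F y ^ (i:ℝ)) ^ (1/(i:ℝ)) := by
      rw [← Real.rpow_mul (hF0 y), mul_one_div, div_self (ne_of_gt hirpos), Real.rpow_one]
    rw [hFy]
    have step : (F y ^ (i:ℝ)) ^ (1/(i:ℝ)) ≤
        (C₀ * ((2:ℝ) ^ i) ^ (d : ℝ) * ((2:ℝ) ^ i) ^ ((i:ℝ) * (1 - (d : ℝ)))) ^ (1/(i:ℝ)) := by
      apply Real.rpow_le_rpow (Real.rpow_nonneg (hF0 y) _) hreal (by positivity)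
    refine le_trans step ?_
    have h2 : ((2:ℝ) ^ i) = (2:ℝ) ^ (i:ℝ) := (Real.rpow_natCast 2 i).symm
    rw [h2, ← Real.rpow_mul (by norm_num), ← Real.rpow_mul (by norm_num)]
    rw [Real.mul_rpow (by positivity) (by positivity), Real.mul_rpow (by positivity) (by positivity)]
    rw [← Real.rpow_mul (by norm_num), ← Real.rpow_mul (by norm_num)]
    have e1 : (i:ℝ) * (d:ℝ) * (1/(i:ℝ)) = (d:ℝ) := by field_simp
    have e2 : (i:ℝ) * ((i:ℝ) * (1 - (d:ℝ))) * (1/(i:ℝ)) = -(i:ℝ) * ((d:ℝ) - 1) := by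
      field_simp; ring
    rw [e1, e2]
    have hC : C₀ ^ (1/(i:ℝ)) ≤ C₀ := by
      calc C₀ ^ (1/(i:ℝ)) ≤ C₀ ^ (1:ℝ) :=
        Real.rpow_le_rpow_of_exponent_le hC₀ (by rw [div_le_one hirpos]; exact hir)
      _ = C₀ := Real.rpow_one C₀
    apply mul_le_mul_of_nonneg_right (mul_le_mul_of_nonneg_right hC (by positivity)) (by positivity)

lemma kernel_bound (α : ℝ) (hα : 0 < α) (z : Zd d) :
    (1 + ‖castZ z‖ ^ α)⁻¹ ≤ (2:ℝ) ^ (-(scl z : ℝ) * α) := by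
  rcases Nat.eq_zero_or_pos (scl z) with h0 | hpos
  · rw [h0]
    simp only [Nat.cast_zero, neg_zero, zero_mul, Real.rpow_zero]
    rw [inv_le_one_iff₀]
    right
    have : (0:ℝ) ≤ ‖castZ z‖ ^ α := Real.rpow_nonneg (norm_nonneg _) α
    linarith
  · have hlt := pow_scl_lt_norm z hpos
    have h1 : ((2:ℝ) ^ (scl z)) ^ α ≤ ‖castZ z‖ ^ α :=
      Real.rpow_le_rpow (by positivity) (le_of_lt hlt) (le_of_lt hα)
    have h2 : (0:ℝ) < ((2:ℝ) ^ (scl z)) ^ α := by positivity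
    calc (1 + ‖castZ z‖ ^ α)⁻¹ ≤ (((2:ℝ) ^ (scl z)) ^ α)⁻¹ := by
          apply inv_anti₀ h2; linarith
    _ = (2:ℝ) ^ (-(scl z : ℝ) * α) := by
        rw [← Real.rpow_natCast 2 (scl z), ← Real.rpow_mul (by norm_num),
          ← Real.rpow_neg_one ((2:ℝ) ^ ((scl z:ℝ)*α)), ← Real.rpow_mul (by norm_num)]
        ring_nf

lemma expo_ineq (dr α ε mr Mr kr : ℝ) (hα1 : 2 < α) (hα2 : α < dr)
    (hε : ε = (α-2)/2) (hm : 0 ≤ mr) (hmM : mr ≤ Mr) (hkM : kr ≤ Mr + 1) :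
    mr*dr + kr*dr - (mr+Mr)*(dr-1) - kr*α ≤ 2*(dr-α+ε) - (mr+Mr)*(ε/2) - kr*ε := by
  nlinarith [mul_nonneg (by linarith : (0:ℝ) ≤ dr - α + ε) (by linarith : (0:ℝ) ≤ Mr + 1 - kr),
    mul_nonneg (by linarith : (0:ℝ) ≤ ε) (by linarith : (0:ℝ) ≤ Mr - mr)]

lemma tsum_prod_mul {A B : Type*} (f : A → ℝ≥0∞) (g : B → ℝ≥0∞) :
    ∑' p : A × B, f p.1 * g p.2 = (∑' a, f a) * (∑' b, g b) := by
  rw [ENNReal.tsum_prod']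
  simp_rw [ENNReal.tsum_mul_left]
  rw [ENNReal.tsum_mul_right]

lemma tsum_triple_mul (f g h : ℕ → ℝ≥0∞) :
    ∑' t : ℕ × ℕ × ℕ, f t.1 * g t.2.1 * h t.2.2
      = (∑' n, f n) * (∑' n, g n) * (∑' n, h n) := by
  calc ∑' t : ℕ × ℕ × ℕ, f t.1 * g t.2.1 * h t.2.2
      = ∑' t : ℕ × ℕ × ℕ, f t.1 * (g t.2.1 * h t.2.2) := by simp_rw [mul_assoc]
  _ = (∑' n, f n) * (∑' w : ℕ × ℕ, g w.1 * h w.2) :=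
      tsum_prod_mul f (fun w : ℕ × ℕ => g w.1 * h w.2)
  _ = (∑' n, f n) * ((∑' n, g n) * (∑' n, h n)) := by rw [tsum_prod_mul]
  _ = (∑' n, f n) * (∑' n, g n) * (∑' n, h n) := by ring

lemma geom_ne_top (q : ℝ≥0∞) (hq : q < 1) : (∑' n : ℕ, q ^ n) ≠ ⊤ := by
  rw [ENNReal.tsum_geometric]
  rw [ENNReal.inv_ne_top]
  exact ne_of_gt (tsub_pos_of_lt hq)

lemma core_shape (C q1 q2 q3 q4 q5 e r1 r2 r3 : ℝ) (hC : 0 ≤ C)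
    (hsum : q1+q2+q3+q4+q5 ≤ e + (r1+r2+r3)) :
    C * (2:ℝ)^q1 * (C * (2:ℝ)^q2) * (2:ℝ)^q3 * ((2:ℝ)^q4 * (2:ℝ)^q5)
      ≤ (C^2 * (2:ℝ)^e) * ((2:ℝ)^r1 * (2:ℝ)^r2 * (2:ℝ)^r3) := by
  have h1 : C * (2:ℝ)^q1 * (C * (2:ℝ)^q2) * (2:ℝ)^q3 * ((2:ℝ)^q4 * (2:ℝ)^q5)
      = C^2 * (2:ℝ)^(q1+(q2+(q3+(q4+q5)))) := by
    rw [Real.rpow_add two_pos, Real.rpow_add two_pos, Real.rpow_add two_pos,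
      Real.rpow_add two_pos]
    ring
  have h2 : (C^2 * (2:ℝ)^e) * ((2:ℝ)^r1 * (2:ℝ)^r2 * (2:ℝ)^r3)
      = C^2 * (2:ℝ)^(e+(r1+(r2+r3))) := by
    rw [Real.rpow_add two_pos, Real.rpow_add two_pos, Real.rpow_add two_pos]
    ring
  rw [h1, h2]
  apply mul_le_mul_of_nonneg_left _ (by positivity)
  exact Real.rpow_le_rpow_of_exponent_le one_le_two (by linarith)

/-- The "swap to difference variable" involution. -/
def subE (d : ℕ) : Zd d × Zd d ≃ Zd d × Zd d where
  toFun p := (p.1, p.1 - p.2)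
  invFun p := (p.1, p.1 - p.2)
  left_inv p := by simp
  right_inv p := by simp

end Stmt12Aux

open Stmt12Aux

open Classical in
/-- The deterministic double-sum estimate: for `d > 2`, `2 < α < d`,
any nonnegative `F : ℤ^d → [0,∞)` bounded by `C₀` and satisfying the dyadic annulus
bounds `∑_{2^i<|y|≤2^{i+1}} F(y)^p ≤ C₀ 2^{id} 2^{ip(1-d)}` satisfies
`∑_{y,y'} F(y) F(y') (1+|y-y'|^α)⁻¹ ≤ C` with `C = C(d,α,C₀)`. -/
theorem statement12 (d : ℕ) (hd : 2 < d) (α : ℝ) (hα1 : 2 < α) (hα2 : α < d)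
    (C₀ : ℝ) (hC₀ : 1 ≤ C₀) :
    ∃ C : ℝ, ∀ F : Zd d → ℝ, (∀ y, 0 ≤ F y) → (∀ y, F y ≤ C₀) →
      (∀ p : ℝ, 1 ≤ p → ∀ i : ℕ, 1 ≤ i →
        (∑' y : Zd d, (if (2:ℝ) ^ i < ‖castZ y‖ ∧ ‖castZ y‖ ≤ (2:ℝ) ^ (i+1)
            then ENNReal.ofReal (F y ^ p) else 0))
          ≤ ENNReal.ofReal (C₀ * ((2:ℝ) ^ i) ^ (d : ℝ) * ((2:ℝ) ^ i) ^ (p * (1 - (d : ℝ))))) →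
      (∑' y : Zd d, ∑' y' : Zd d,
          ENNReal.ofReal (F y * F y' * (1 + ‖castZ (y - y')‖ ^ α)⁻¹))
        ≤ ENNReal.ofReal C := by
  classical
  have hα0 : (0:ℝ) < α := by linarith
  have hdr : (3:ℝ) ≤ (d:ℝ) := by exact_mod_cast hd
  -- the dominating data
  set G : ℕ × ℕ × ℕ → ℝ≥0∞ := fun t =>
    ENNReal.ofReal (C₀ * (2:ℝ)^(d:ℝ) * (2:ℝ)^(-(t.1:ℝ)*((d:ℝ)-1)) *
      (C₀ * (2:ℝ)^(d:ℝ) * (2:ℝ)^(-(t.2.1:ℝ)*((d:ℝ)-1))) * (2:ℝ)^(-(t.2.2:ℝ)*α)) with hG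
  set Q1 : ℝ≥0∞ := ENNReal.ofReal ((2:ℝ)^(-((α-2)/4))) with hQ1
  set Q2 : ℝ≥0∞ := ENNReal.ofReal ((2:ℝ)^(-((α-2)/2))) with hQ2
  set C₆ : ℝ := (C₀ * (2:ℝ)^(d:ℝ))^2 * (2:ℝ)^(8*(d:ℝ)) with hC₆
  set B : ℝ≥0∞ := ENNReal.ofReal C₆ * ((∑' n:ℕ, Q1^n) * (∑' n:ℕ, Q1^n) * (∑' n:ℕ, Q2^n))
    with hB
  have hQ1lt : Q1 < 1 := by
    rw [hQ1, ENNReal.ofReal_lt_one]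
    exact Real.rpow_lt_one_of_one_lt_of_neg one_lt_two (by linarith)
  have hQ2lt : Q2 < 1 := by
    rw [hQ2, ENNReal.ofReal_lt_one]
    exact Real.rpow_lt_one_of_one_lt_of_neg one_lt_two (by linarith)
  have hBtop : B ≠ ⊤ := by
    rw [hB]
    apply ENNReal.mul_ne_top ENNReal.ofReal_ne_top
    apply ENNReal.mul_ne_top
    apply ENNReal.mul_ne_top (geom_ne_top _ hQ1lt) (geom_ne_top _ hQ1lt)
    exact geom_ne_top _ hQ2lt
  refine ⟨B.toReal, ?_⟩
  intro F hF0 hFC hyp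
  rw [ENNReal.ofReal_toReal hBtop]
  have hFb := Fbound C₀ hC₀ F hF0 hFC hyp
  -- Step 1: pointwise domination
  have step1 : (∑' y : Zd d, ∑' y' : Zd d,
      ENNReal.ofReal (F y * F y' * (1 + ‖castZ (y - y')‖ ^ α)⁻¹))
      ≤ ∑' y : Zd d, ∑' y' : Zd d, G (scl y, scl y', scl (y - y')) := by
    apply ENNReal.tsum_le_tsum
    intro y
    apply ENNReal.tsum_le_tsum
    intro y'
    apply ENNReal.ofReal_le_ofReal
    have hker := kernel_bound α hα0 (y - y')
    have hknn : (0:ℝ) ≤ (1 + ‖castZ (y - y')‖ ^ α)⁻¹ := by positivity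
    apply mul_le_mul (mul_le_mul (hFb y) (hFb y') (hF0 y') (by positivity)) hker hknn
      (by positivity)
  refine le_trans step1 ?_
  -- Step 2: as a sum over pairs, and substitute (y, y') ↦ (y, y - y')
  have step2 : (∑' y : Zd d, ∑' y' : Zd d, G (scl y, scl y', scl (y - y')))
      = ∑' p : Zd d × Zd d, G (scl p.1, scl (p.1 - p.2), scl p.2) := by
    have e0 : (∑' y : Zd d, ∑' y' : Zd d, G (scl y, scl y', scl (y - y')))
        = ∑' p : Zd d × Zd d, G (scl p.1, scl p.2, scl (p.1 - p.2)) :=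
      (ENNReal.tsum_prod' (f := fun p : Zd d × Zd d => G (scl p.1, scl p.2, scl (p.1 - p.2)))).symm
    rw [e0]
    rw [← Equiv.tsum_eq (subE d) (fun p => G (scl p.1, scl p.2, scl (p.1 - p.2)))]
    apply tsum_congr
    intro p
    have : p.1 - (p.1 - p.2) = p.2 := by ring
    simp only [subE, Equiv.coe_fn_mk, this]
  rw [step2]
  -- Step 3: fibre the sum over the triple of scales
  set N : ℕ × ℕ × ℕ → ℝ≥0∞ := fun t =>
    ∑' p : Zd d × Zd d, (if t = (scl p.1, scl (p.1 - p.2), scl p.2) then (1:ℝ≥0∞) else 0)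
    with hN
  have step3 : (∑' p : Zd d × Zd d, G (scl p.1, scl (p.1 - p.2), scl p.2))
      = ∑' t : ℕ × ℕ × ℕ, G t * N t := by
    have e1 : ∀ p : Zd d × Zd d, G (scl p.1, scl (p.1 - p.2), scl p.2)
        = ∑' t : ℕ × ℕ × ℕ, (if t = (scl p.1, scl (p.1 - p.2), scl p.2) then G t else 0) := by
      intro p
      rw [tsum_eq_single (scl p.1, scl (p.1 - p.2), scl p.2) (fun t ht => if_neg ht)]
      simp
    rw [tsum_congr e1, ENNReal.tsum_comm]
    apply tsum_congr
    intro t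
    rw [hN]
    rw [← ENNReal.tsum_mul_left]
    apply tsum_congr
    intro p
    split <;> simp_all
  rw [step3]
  -- Step 4: per-triple bound
  have count1 : ∀ i k : ℕ, ∀ j : ℕ, N (i, j, k) ≤ 2^((i+3)*d) * 2^((k+3)*d) := by
    intro i k j
    have hle : N (i, j, k) ≤ ∑' p : Zd d × Zd d,
        (if scl p.1 = i then (1:ℝ≥0∞) else 0) * (if scl p.2 = k then (1:ℝ≥0∞) else 0) := by
      rw [hN]
      apply ENNReal.tsum_le_tsum
      intro p
      split
      · rename_i h
        rw [Prod.mk.injEq, Prod.mk.injEq] at h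
        rw [if_pos h.1.symm, if_pos h.2.2.symm, one_mul]
      · positivity
    refine le_trans hle ?_
    calc (∑' p : Zd d × Zd d,
          (if scl p.1 = i then (1:ℝ≥0∞) else 0) * (if scl p.2 = k then (1:ℝ≥0∞) else 0))
        = (∑' a : Zd d, if scl a = i then (1:ℝ≥0∞) else 0)
            * (∑' b : Zd d, if scl b = k then (1:ℝ≥0∞) else 0) :=
          tsum_prod_mul (fun a => if scl a = i then (1:ℝ≥0∞) else 0)
            (fun b => if scl b = k then (1:ℝ≥0∞) else 0)
      _ ≤ _ := mul_le_mul' (count_scl i) (count_scl k)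
  have count2 : ∀ i k : ℕ, ∀ j : ℕ, N (i, j, k) ≤ 2^((j+3)*d) * 2^((k+3)*d) := by
    intro i k j
    have hle : N (i, j, k) ≤ ∑' p : Zd d × Zd d,
        (if scl (p.1 - p.2) = j then (1:ℝ≥0∞) else 0) * (if scl p.2 = k then (1:ℝ≥0∞) else 0) := by
      rw [hN]
      apply ENNReal.tsum_le_tsum
      intro p
      split
      · rename_i h
        rw [Prod.mk.injEq, Prod.mk.injEq] at h
        rw [if_pos h.2.1.symm, if_pos h.2.2.symm, one_mul]
      · positivity
    refine le_trans hle ?_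
    rw [ENNReal.tsum_prod', ENNReal.tsum_comm]
    calc (∑' b : Zd d, ∑' a : Zd d,
        (if scl (a - b) = j then (1:ℝ≥0∞) else 0) * (if scl b = k then (1:ℝ≥0∞) else 0))
        = ∑' b : Zd d, (∑' a : Zd d, (if scl (a - b) = j then (1:ℝ≥0∞) else 0))
            * (if scl b = k then (1:ℝ≥0∞) else 0) := by
          apply tsum_congr; intro b; rw [ENNReal.tsum_mul_right]
      _ = ∑' b : Zd d, (∑' a : Zd d, (if scl a = j then (1:ℝ≥0∞) else 0))
            * (if scl b = k then (1:ℝ≥0∞) else 0) := by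
          apply tsum_congr; intro b
          congr 1
          exact Equiv.tsum_eq (Equiv.subRight b) (fun a => if scl a = j then (1:ℝ≥0∞) else 0)
      _ = (∑' a : Zd d, (if scl a = j then (1:ℝ≥0∞) else 0))
            * ∑' b : Zd d, (if scl b = k then (1:ℝ≥0∞) else 0) := ENNReal.tsum_mul_left
      _ ≤ 2^((j+3)*d) * 2^((k+3)*d) := mul_le_mul' (count_scl j) (count_scl k)
  have countzero : ∀ i j k : ℕ, max i j + 2 ≤ k → N (i, j, k) = 0 := by
    intro i j k hk
    rw [hN]
    rw [ENNReal.tsum_eq_zero]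
    intro p
    rw [if_neg]
    intro h
    rw [Prod.mk.injEq, Prod.mk.injEq] at h
    obtain ⟨h1, h2, h3⟩ := h
    have hk1 : 1 ≤ scl p.2 := by omega
    have hlt : (2:ℝ) ^ (scl p.2) < ‖castZ p.2‖ := pow_scl_lt_norm p.2 hk1
    have hsub : castZ p.2 = castZ p.1 - castZ (p.1 - p.2) := by
      calc castZ p.2 = castZ (p.1 - (p.1 - p.2)) := by rw [sub_sub_cancel]
      _ = castZ p.1 - castZ (p.1 - p.2) := castZ_sub _ _
    have hnorm : ‖castZ p.2‖ ≤ ‖castZ p.1‖ + ‖castZ (p.1 - p.2)‖ := by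
      rw [hsub]; exact norm_sub_le _ _
    have hb1 : ‖castZ p.1‖ ≤ (2:ℝ) ^ (max i j + 1) := by
      calc ‖castZ p.1‖ ≤ (2:ℝ) ^ (scl p.1 + 1) := norm_le_pow_scl p.1
      _ ≤ (2:ℝ) ^ (max i j + 1) := by
          apply pow_le_pow_right₀ one_le_two; omega
    have hb2 : ‖castZ (p.1 - p.2)‖ ≤ (2:ℝ) ^ (max i j + 1) := by
      calc ‖castZ (p.1 - p.2)‖ ≤ (2:ℝ) ^ (scl (p.1 - p.2) + 1) := norm_le_pow_scl _
      _ ≤ (2:ℝ) ^ (max i j + 1) := by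
          apply pow_le_pow_right₀ one_le_two; omega
    have hup : (2:ℝ) ^ (max i j + 2) ≤ (2:ℝ) ^ (scl p.2) := by
      apply pow_le_pow_right₀ one_le_two; omega
    have : (2:ℝ) ^ (max i j + 2) = (2:ℝ)^(max i j + 1) + (2:ℝ)^(max i j + 1) := by ring
    linarith
  -- the core real-number estimate
  have core : ∀ i j k : ℕ, k ≤ max i j + 1 →
      G (i, j, k) * ((2:ℝ≥0∞)^((min i j+3)*d) * (2:ℝ≥0∞)^((k+3)*d))
        ≤ ENNReal.ofReal C₆ * (Q1^i * Q1^j * Q2^k) := by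
    intro i j k hk
    have hofr : ∀ n : ℕ, ((2:ℝ≥0∞))^n = ENNReal.ofReal ((2:ℝ)^n) := by
      intro n
      rw [ENNReal.ofReal_pow (by norm_num)]
      norm_num
    rw [hG]
    simp only
    rw [hofr, hofr, ← ENNReal.ofReal_mul (by positivity), ← ENNReal.ofReal_mul (by positivity)]
    rw [hQ1, hQ2, ← ENNReal.ofReal_pow (by positivity), ← ENNReal.ofReal_pow (by positivity),
      ← ENNReal.ofReal_pow (by positivity), ← ENNReal.ofReal_mul (by positivity),
      ← ENNReal.ofReal_mul (by positivity), ← ENNReal.ofReal_mul (by positivity)]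
    apply ENNReal.ofReal_le_ofReal
    -- now a pure real inequality
    have hnat1 : ((2:ℝ))^((min i j+3)*d) = (2:ℝ)^((((min i j):ℝ)+3)*(d:ℝ)) := by
      rw [← Real.rpow_natCast 2 ((min i j+3)*d)]
      congr 1
      push_cast; ring
    have hnat2 : ((2:ℝ))^((k+3)*d) = (2:ℝ)^(((k:ℝ)+3)*(d:ℝ)) := by
      rw [← Real.rpow_natCast 2 ((k+3)*d)]
      congr 1
      push_cast; ring
    have hq1i : ((2:ℝ)^(-((α-2)/4)))^i = (2:ℝ)^(-((α-2)/4)*(i:ℝ)) := by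
      rw [← Real.rpow_natCast ((2:ℝ)^(-((α-2)/4))) i, ← Real.rpow_mul (by norm_num)]
    have hq1j : ((2:ℝ)^(-((α-2)/4)))^j = (2:ℝ)^(-((α-2)/4)*(j:ℝ)) := by
      rw [← Real.rpow_natCast ((2:ℝ)^(-((α-2)/4))) j, ← Real.rpow_mul (by norm_num)]
    have hq2k : ((2:ℝ)^(-((α-2)/2)))^k = (2:ℝ)^(-((α-2)/2)*(k:ℝ)) := by
      rw [← Real.rpow_natCast ((2:ℝ)^(-((α-2)/2))) k, ← Real.rpow_mul (by norm_num)]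
    rw [hnat1, hnat2, hq1i, hq1j, hq2k, hC₆]
    apply core_shape _ _ _ _ _ _ _ _ _ _ (by positivity)
    have hmM : ((min i j : ℕ):ℝ) ≤ ((max i j : ℕ):ℝ) := by exact_mod_cast min_le_max
    have hkM : (k:ℝ) ≤ ((max i j : ℕ):ℝ) + 1 := by exact_mod_cast hk
    have hij : ((min i j : ℕ):ℝ) + ((max i j : ℕ):ℝ) = (i:ℝ) + (j:ℝ) := by
      rcases le_total i j with h | h
      · rw [min_eq_left h, max_eq_right h]
      · rw [min_eq_right h, max_eq_left h]; push_cast; ring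
    have key := expo_ineq (d:ℝ) α ((α-2)/2) ((min i j : ℕ):ℝ) ((max i j : ℕ):ℝ) (k:ℝ)
      hα1 (by linarith) rfl (by positivity) hmM hkM
    push_cast at key hij hmM hkM
    have e1 : (((i:ℝ) ⊓ (j:ℝ)) + ((i:ℝ) ⊔ (j:ℝ))) * ((d:ℝ) - 1) = ((i:ℝ) + (j:ℝ)) * ((d:ℝ) - 1) := by
      rw [hij]
    have e2 : (((i:ℝ) ⊓ (j:ℝ)) + ((i:ℝ) ⊔ (j:ℝ))) * ((α - 2) / 2 / 2)
        = ((i:ℝ) + (j:ℝ)) * ((α - 2) / 2 / 2) := by rw [hij]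
    linarith [key, e1, e2]
  have hbound : ∀ t : ℕ × ℕ × ℕ, G t * N t
      ≤ ENNReal.ofReal C₆ * (Q1^t.1 * Q1^t.2.1 * Q2^t.2.2) := by
    rintro ⟨i, j, k⟩
    rcases le_or_gt k (max i j + 1) with hkle | hkgt
    · rcases le_total i j with hij | hij
      · calc G (i,j,k) * N (i,j,k)
            ≤ G (i,j,k) * ((2:ℝ≥0∞)^((i+3)*d) * (2:ℝ≥0∞)^((k+3)*d)) :=
            mul_le_mul_right (count1 i k j) _
        _ = G (i,j,k) * ((2:ℝ≥0∞)^((min i j+3)*d) * (2:ℝ≥0∞)^((k+3)*d)) := by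
            rw [min_eq_left hij]
        _ ≤ _ := core i j k hkle
      · calc G (i,j,k) * N (i,j,k)
            ≤ G (i,j,k) * ((2:ℝ≥0∞)^((j+3)*d) * (2:ℝ≥0∞)^((k+3)*d)) :=
            mul_le_mul_right (count2 i k j) _
        _ = G (i,j,k) * ((2:ℝ≥0∞)^((min i j+3)*d) * (2:ℝ≥0∞)^((k+3)*d)) := by
            rw [min_eq_right hij]
        _ ≤ _ := core i j k hkle
    · have h0 : N (i,j,k) = 0 := countzero i j k (by omega)
      rw [h0, mul_zero]
      exact zero_le
  calc (∑' t : ℕ × ℕ × ℕ, G t * N t)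
      ≤ ∑' t : ℕ × ℕ × ℕ, ENNReal.ofReal C₆ * (Q1^t.1 * Q1^t.2.1 * Q2^t.2.2) :=
      ENNReal.tsum_le_tsum hbound
  _ = ENNReal.ofReal C₆ * ∑' t : ℕ × ℕ × ℕ, Q1^t.1 * Q1^t.2.1 * Q2^t.2.2 :=
      ENNReal.tsum_mul_left
  _ = ENNReal.ofReal C₆ * ((∑' n : ℕ, Q1^n) * (∑' n : ℕ, Q1^n) * (∑' n : ℕ, Q2^n)) :=
      congrArg _ (tsum_triple_mul (fun n => Q1^n) (fun n => Q1^n) (fun n => Q2^n))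
  _ = B := hB.symm
end
end
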